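/- arXiv:1403.5891 — 7 statements merged into one kernel-verified Lean document; each statement's English description precedes it below -/
import Mathlib

section
/- Suppose s is absolutely continuous with respect to t, and let (H_s, ι_s) be a realization of the Hilbert space associated with s. Then for every f ∈ H_s there exists a sequence (x_n) in D such that ⟨ι_s x, f⟩ = lim_{n→∞} t(x, x_n) for all x ∈ D; moreover the convergence is uniform on the set {x ∈ D : s(x,x) + t(x,x) ≤ 1}, i.e. sup{|⟨ι_s x, f⟩ − t(x, x_n)| : x ∈ D, s(x,x) + t(x,x) ≤ 1} → 0 as n → ∞. -/
open Filter Topology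
open scoped ComplexInnerProductSpace

/-- `s : D → D → ℂ` is a nonnegative Hermitian form: linear in the first argument,
conjugate-symmetric, and with nonnegative diagonal. -/
def IsNonnegHermForm {D : Type*} [AddCommGroup D] [Module ℂ D] (s : D → D → ℂ) : Prop :=
  (∀ x y z : D, s (x + y) z = s x z + s y z) ∧
  (∀ (c : ℂ) (x y : D), s (c • x) y = c * s x y) ∧
  (∀ x y : D, s x y = (starRingEnd ℂ) (s y x)) ∧
  (∀ x : D, 0 ≤ (s x x).re)

/-- `s` is absolutely continuous with respect to `t`. -/
def FormAC {D : Type*} [AddCommGroup D] [Module ℂ D] (s t : D → D → ℂ) : Prop :=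
  ∀ x : ℕ → D,
    Tendsto (fun n => t (x n) (x n)) atTop (𝓝 0) →
    Tendsto (fun p : ℕ × ℕ => s (x p.1 - x p.2) (x p.1 - x p.2)) atTop (𝓝 0) →
    Tendsto (fun n => s (x n) (x n)) atTop (𝓝 0)

section AuxIPS

variable {F : Type*} [AddCommGroup F] [Module ℂ F] [cd : PreInnerProductSpace.Core ℂ F]

attribute [local instance] InnerProductSpace.Core.toSeminormedAddCommGroup
  InnerProductSpace.Core.toNormedSpace

@[reducible]
noncomputable def preIPS : InnerProductSpace ℂ F :=
  { InnerProductSpace.Core.toNormedSpace (𝕜 := ℂ) (F := F), cd.toInner with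
    norm_sq_eq_re_inner := fun x => Real.sq_sqrt (cd.re_inner_nonneg x)
    conj_inner_symm := cd.conj_inner_symm
    add_left := cd.add_left
    smul_left := cd.smul_left }

end AuxIPS

lemma seq_approx {α K : Type*} [PseudoMetricSpace K] {g : α → K} (hd : DenseRange g) (k : K) :
    ∃ x : ℕ → α, Tendsto (fun n => g (x n)) atTop (𝓝 k) ∧
      ∀ n : ℕ, dist (g (x n)) k < 1 / (n + 1) := by
  have h : ∀ n : ℕ, ∃ a : α, dist k (g a) < 1 / (n + 1) := fun n =>
    hd.exists_dist_lt k (by positivity)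
  choose x hx using h
  have hx' : ∀ n : ℕ, dist (g (x n)) k < 1 / (n + 1) := fun n => by
    rw [dist_comm]; exact hx n
  refine ⟨x, ?_, hx'⟩
  rw [tendsto_iff_dist_tendsto_zero]
  refine squeeze_zero (fun n => dist_nonneg) (fun n => (hx' n).le) ?_
  exact tendsto_one_div_add_atTop_nhds_zero_nat

open UniformSpace in
/-- **Theorem (Radon–Nikodym for forms).** If `s` is absolutely continuous with respect to `t`
and `(H, ι)` is a realization of the Hilbert space associated with `s`, then for every `f ∈ H`
there is a sequence `(x n)` in `D` with `⟨ι x, f⟩ = lim_n t (x, x n)` for every `x ∈ D`, and the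
convergence is uniform on `{x : s(x,x) + t(x,x) ≤ 1}`.
(Here, for a paper-style inner product `⟨·,·⟩` linear in the first variable, `⟨a, b⟩ = ⟪b, a⟫`
in Mathlib's convention, which is linear in the second variable.) -/
theorem radon_nikodym_forms
    {D : Type*} [AddCommGroup D] [Module ℂ D]
    (s t : D → D → ℂ) (hs : IsNonnegHermForm s) (ht : IsNonnegHermForm t)
    (hac : FormAC s t)
    {H : Type*} [NormedAddCommGroup H] [InnerProductSpace ℂ H] [CompleteSpace H]
    (ι : D →ₗ[ℂ] H) (hdense : DenseRange ι)
    (hreal : ∀ x y : D, ⟪ι y, ι x⟫ = s x y)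
    (f : H) :
    ∃ x : ℕ → D,
      (∀ y : D, Tendsto (fun n => t y (x n)) atTop (𝓝 ⟪f, ι y⟫)) ∧
      (∀ ε : ℝ, 0 < ε → ∃ N : ℕ, ∀ n ≥ N, ∀ y : D,
        (s y y).re + (t y y).re ≤ 1 → ‖⟪f, ι y⟫ - t y (x n)‖ ≤ ε) := by
  classical
  obtain ⟨sadd, ssmul, ssymm, spos⟩ := hs
  obtain ⟨tadd, tsmul, tsymm, tpos⟩ := ht
  -- second-argument additivity / conj-linearity
  have sadd' : ∀ a b c : D, s c (a + b) = s c a + s c b := by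
    intro a b c
    rw [ssymm c (a + b), sadd, map_add, ← ssymm c a, ← ssymm c b]
  have tadd' : ∀ a b c : D, t c (a + b) = t c a + t c b := by
    intro a b c
    rw [tsymm c (a + b), tadd, map_add, ← tsymm c a, ← tsymm c b]
  have ssmul' : ∀ (r : ℂ) (a b : D), s b (r • a) = (starRingEnd ℂ) r * s b a := by
    intro r a b
    rw [ssymm b (r • a), ssmul, map_mul, ← ssymm b a]
  have tsmul' : ∀ (r : ℂ) (a b : D), t b (r • a) = (starRingEnd ℂ) r * t b a := by
    intro r a b
    rw [tsymm b (r • a), tsmul, map_mul, ← tsymm b a]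
  -- the pre-inner-product core of the form r = s + t
  letI cd : PreInnerProductSpace.Core ℂ D :=
    { inner := fun a b => s b a + t b a
      conj_inner_symm := fun a b => by
        show (starRingEnd ℂ) (s a b + t a b) = s b a + t b a
        rw [map_add, ← ssymm b a, ← tsymm b a]
      re_inner_nonneg := fun a => by
        show 0 ≤ RCLike.re (s a a + t a a)
        have h1 := spos a; have h2 := tpos a
        simp only [RCLike.re_to_complex, Complex.add_re]
        linarith
      add_left := fun a b c => by
        show s c (a + b) + t c (a + b) = (s c a + t c a) + (s c b + t c b)
        rw [sadd', tadd']; ring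
      smul_left := fun a b r => by
        show s b (r • a) + t b (r • a) = (starRingEnd ℂ) r * (s b a + t b a)
        rw [ssmul', tsmul']; ring }
  letI : SeminormedAddCommGroup D := InnerProductSpace.Core.toSeminormedAddCommGroup (𝕜 := ℂ) (F := D)
  letI : NormedSpace ℂ D := InnerProductSpace.Core.toNormedSpace (𝕜 := ℂ) (F := D)
  letI : InnerProductSpace ℂ D := preIPS
  have hinnD : ∀ a b : D, (inner ℂ a b : ℂ) = s b a + t b a := fun a b => rfl
  -- the map ι as a continuous linear map
  have hsb : ∀ a : D, ‖ι a‖ ^ 2 = (s a a).re := by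
    intro a
    have := @norm_sq_eq_re_inner ℂ H _ _ _ (ι a)
    rw [this, hreal a a, RCLike.re_to_complex]
  have hDnorm : ∀ a : D, ‖a‖ ^ 2 = (s a a).re + (t a a).re := by
    intro a
    have := @norm_sq_eq_re_inner ℂ D _ _ _ a
    rw [this, hinnD a a, RCLike.re_to_complex, Complex.add_re]
  have hbound : ∀ a : D, ‖ι a‖ ≤ 1 * ‖a‖ := by
    intro a
    have h1 := hsb a
    have h2 := hDnorm a
    have h3 := tpos a
    nlinarith [norm_nonneg (ι a), norm_nonneg a]
  let ιL : D →L[ℂ] H := ι.mkContinuous 1 hbound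
  have hιL : ∀ a : D, ιL a = ι a := fun a => rfl
  -- extension to the completion K
  let ιadd : D →+ H := ιL.toLinearMap.toAddMonoidHom
  let J₀ : Completion D →+ H := ιadd.extension ιL.continuous
  have hJ₀ : ∀ a : D, J₀ (a : Completion D) = ι a := fun a =>
    ιadd.extension_coe ιL.continuous a
  have hJ₀c : Continuous ⇑J₀ := ιadd.continuous_extension ιL.continuous
  have hJ₀smul : ∀ (c : ℂ) (u : Completion D), J₀ (c • u) = c • J₀ u := by
    intro c u
    refine Completion.induction_on u ?_ ?_
    · exact isClosed_eq (hJ₀c.comp (continuous_const_smul c)) (hJ₀c.const_smul c)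
    · intro a
      rw [← Completion.coe_smul, hJ₀, hJ₀, map_smul]
  have hJ₀b : ∀ u : Completion D, ‖J₀ u‖ ≤ 1 * ‖u‖ := by
    intro u
    refine Completion.induction_on u ?_ ?_
    · exact isClosed_le hJ₀c.norm (continuous_const.mul continuous_norm)
    · intro a
      rw [hJ₀, Completion.norm_coe]
      exact hbound a
  let J : Completion D →L[ℂ] H :=
    LinearMap.mkContinuous
      { toFun := ⇑J₀, map_add' := J₀.map_add, map_smul' := hJ₀smul } 1 hJ₀b
  have hJ : ∀ a : D, J (a : Completion D) = ι a := hJ₀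
  -- the positive operator A = I - J†J
  let J' := ContinuousLinearMap.adjoint J
  let A : Completion D →L[ℂ] Completion D := ContinuousLinearMap.id ℂ _ - J'.comp J
  have hA : ∀ u v : Completion D, ⟪A u, v⟫ = ⟪u, v⟫ - ⟪J u, J v⟫ := by
    intro u v
    simp only [A, ContinuousLinearMap.coe_sub', Pi.sub_apply, ContinuousLinearMap.coe_id', id_eq,
      ContinuousLinearMap.coe_comp', Function.comp_apply, inner_sub_left]
    rw [ContinuousLinearMap.adjoint_inner_left]
  have hA' : ∀ u v : Completion D, ⟪u, A v⟫ = ⟪u, v⟫ - ⟪J u, J v⟫ := by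
    intro u v
    simp only [A, ContinuousLinearMap.coe_sub', Pi.sub_apply, ContinuousLinearMap.coe_id', id_eq,
      ContinuousLinearMap.coe_comp', Function.comp_apply, inner_sub_right]
    rw [ContinuousLinearMap.adjoint_inner_right]
  -- t in terms of A
  have htA : ∀ a b : D, ⟪A (a : Completion D), (b : Completion D)⟫ = t b a := by
    intro a b
    rw [hA, Completion.inner_coe, hJ a, hJ b, hreal b a, hinnD a b]
    ring
  -- kernel of A is trivial (this is where absolute continuity is used)
  have hker : ∀ k : Completion D, A k = 0 → k = 0 := by
    intro k hk
    have h0 : (⟪k, k⟫ : ℂ) - ⟪J k, J k⟫ = 0 := by rw [← hA, hk, inner_zero_left]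
    obtain ⟨x, hxk, -⟩ := seq_approx (Completion.denseRange_coe (α := D)) k
    have hJx : Tendsto (fun n => ι (x n)) atTop (𝓝 (J k)) := by
      have := (J.continuous.tendsto k).comp hxk
      simpa only [Function.comp_def, hJ] using this
    -- t (x n) (x n) → 0
    have h1 : Tendsto (fun n => t (x n) (x n)) atTop (𝓝 0) := by
      have hlim : Tendsto
          (fun n => (⟪((x n : Completion D)), ((x n : Completion D))⟫ : ℂ) - ⟪ι (x n), ι (x n)⟫)
          atTop (𝓝 ((⟪k, k⟫ : ℂ) - ⟪J k, J k⟫)) := (hxk.inner hxk).sub (hJx.inner hJx)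
      rw [h0] at hlim
      refine hlim.congr fun n => ?_
      rw [Completion.inner_coe, hinnD, hreal]
      ring
    -- s of differences → 0
    have h2 : Tendsto (fun p : ℕ × ℕ => s (x p.1 - x p.2) (x p.1 - x p.2)) atTop (𝓝 0) := by
      have hcs : CauchySeq (fun n => ι (x n)) := hJx.cauchySeq
      have hdist : Tendsto (fun p : ℕ × ℕ => dist (ι (x p.1)) (ι (x p.2))) atTop (𝓝 0) :=
        cauchySeq_iff_tendsto_dist_atTop_0.mp hcs
      have hu : Tendsto (fun p : ℕ × ℕ => ι (x p.1) - ι (x p.2)) atTop (𝓝 0) := by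
        rw [tendsto_iff_dist_tendsto_zero]
        refine hdist.congr fun p => ?_
        rw [dist_eq_norm, dist_zero_right]
      have hlim : Tendsto (fun p : ℕ × ℕ =>
          (⟪ι (x p.1) - ι (x p.2), ι (x p.1) - ι (x p.2)⟫ : ℂ)) atTop (𝓝 (⟪(0 : H), (0 : H)⟫ : ℂ)) :=
        hu.inner hu
      rw [inner_zero_left] at hlim
      refine hlim.congr fun p => ?_
      rw [← hreal, map_sub]
    have h3 := hac x h1 h2
    have h4 : Tendsto (fun n => s (x n) (x n)) atTop (𝓝 (⟪J k, J k⟫ : ℂ)) := by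
      refine (hJx.inner hJx).congr fun n => ?_
      rw [hreal]
    have h5 : (⟪J k, J k⟫ : ℂ) = 0 := tendsto_nhds_unique h4 h3
    have h6 : J k = 0 := inner_self_eq_zero.mp h5
    have h7 : (⟪k, k⟫ : ℂ) = 0 := by rw [h6, inner_zero_left] at h0; simpa using h0
    exact inner_self_eq_zero.mp h7
  -- A has dense range
  have hAdense : DenseRange (⇑A) := by
    have hsa : ∀ u v : Completion D, ⟪A u, v⟫ = ⟪u, A v⟫ := by
      intro u v; rw [hA, hA']
    have horth : (LinearMap.range (A : Completion D →ₗ[ℂ] Completion D))ᗮ = ⊥ := by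
      rw [Submodule.eq_bot_iff]
      intro v hv
      have hAv : A v = 0 := by
        have h2 : (⟪A (A v), v⟫ : ℂ) = 0 := hv (A (A v)) ⟨A v, rfl⟩
        rw [hsa] at h2
        exact inner_self_eq_zero.mp h2
      exact hker v hAv
    have hcl : (LinearMap.range (A : Completion D →ₗ[ℂ] Completion D)).topologicalClosure = ⊤ := by
      rw [← Submodule.orthogonal_orthogonal_eq_closure, horth, Submodule.bot_orthogonal_eq_top]
    have : Dense ((LinearMap.range (A : Completion D →ₗ[ℂ] Completion D) : Submodule ℂ (Completion D)) : Set (Completion D)) := by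
      rw [Submodule.dense_iff_topologicalClosure_eq_top]
      exact hcl
    exact this
  -- the sequence
  have hadA : DenseRange (fun a : D => A (a : Completion D)) := by
    exact hAdense.comp Completion.denseRange_coe A.continuous
  obtain ⟨x, hxt, hxd⟩ := seq_approx hadA (J' f)
  have hJ'f : ∀ b : D, ⟪J' f, (b : Completion D)⟫ = ⟪f, ι b⟫ := by
    intro b
    rw [ContinuousLinearMap.adjoint_inner_left, hJ]
  refine ⟨x, ?_, ?_⟩
  · intro y
    have := Filter.Tendsto.inner (𝕜 := ℂ) hxt (tendsto_const_nhds (x := (y : Completion D)))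
    rw [hJ'f y] at this
    refine this.congr fun n => ?_
    exact htA (x n) y
  · intro ε hε
    obtain ⟨N, hN⟩ := exists_nat_one_div_lt hε
    refine ⟨N, fun n hn y hy => ?_⟩
    have hy1 : ‖(y : Completion D)‖ ≤ 1 := by
      have h1 : ‖(y : Completion D)‖ ^ 2 ≤ 1 := by
        rw [Completion.norm_coe, hDnorm]
        exact hy
      nlinarith [norm_nonneg (y : Completion D)]
    have key : ⟪f, ι y⟫ - t y (x n) = ⟪J' f - A (x n : Completion D), (y : Completion D)⟫ := by
      rw [inner_sub_left, hJ'f y, htA]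
    rw [key]
    calc ‖⟪J' f - A (x n : Completion D), (y : Completion D)⟫‖
        ≤ ‖J' f - A (x n : Completion D)‖ * ‖(y : Completion D)‖ := norm_inner_le_norm _ _
      _ ≤ ‖J' f - A (x n : Completion D)‖ * 1 := by
          exact mul_le_mul_of_nonneg_left hy1 (norm_nonneg _)
      _ = dist (A (x n : Completion D)) (J' f) := by rw [mul_one, dist_eq_norm, norm_sub_rev]
      _ ≤ ε := by
          have h1 := hxd n
          have h2 : (1 : ℝ) / (n + 1) ≤ 1 / (N + 1) := by
            apply one_div_le_one_div_of_le
            · positivity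
            · exact_mod_cast Nat.succ_le_succ hn
          linarith [hN.le]
end

section
/- Let D = C([−1,1]; ℂ) be the space of continuous complex-valued functions on [−1,1], and define the nonnegative Hermitian forms s(φ,ψ) = φ(0)·conj(ψ(0)) and t(φ,ψ) = ∫_{[−1,1]} φ·conj(ψ) dλ (λ the Lebesgue measure). Then: (a) there exists a sequence (φ_n) in D such that φ(0) = lim_{n→∞} ∫_{[−1,1]} φ·conj(φ_n) dλ for every φ ∈ D (so s is pseudo-absolutely continuous with respect to t, the associated Hilbert space of s being one-dimensional); and (b) s and t are mutually singular: every nonnegative Hermitian form w on D with w(φ,φ) ≤ s(φ,φ) and w(φ,φ) ≤ t(φ,φ) for all φ ∈ D is identically zero. In particular, pseudo-absolute continuity does not imply absolute continuity. -/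
open Filter Topology MeasureTheory
open scoped ComplexInnerProductSpace

attribute [local instance] MeasureTheory.Measure.Subtype.measureSpace

lemma herm_add_right {D : Type*} [AddCommGroup D] [Module ℂ D] {w : D → D → ℂ}
    (hw : IsNonnegHermForm w) (x y z : D) : w x (y + z) = w x y + w x z := by
  obtain ⟨hadd, _, hsym, _⟩ := hw
  rw [hsym x (y + z), hadd, map_add, ← hsym, ← hsym]

lemma herm_cs {D : Type*} [AddCommGroup D] [Module ℂ D] {w : D → D → ℂ}
    (hw : IsNonnegHermForm w) (x y : D) : ‖w x y‖ * ‖w x y‖ ≤ (w x x).re * (w y y).re := by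
  obtain ⟨hadd, hsmul, hsym, hpos⟩ := hw
  letI c : PreInnerProductSpace.Core ℂ D :=
  { inner := fun a b => w b a
    conj_inner_symm := fun a b => (hsym b a).symm
    re_inner_nonneg := fun x => hpos x
    add_left := fun x y z => by
      show w z (x + y) = w z x + w z y
      rw [hsym z (x+y), hadd, map_add, ← hsym, ← hsym]
    smul_left := fun x y r => by
      show w y (r • x) = (starRingEnd ℂ) r * w y x
      rw [hsym y (r • x), hsmul, map_mul, ← hsym] }
  have h := InnerProductSpace.Core.inner_mul_inner_self_le (𝕜 := ℂ) (F := D) y x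
  have h1 : ‖w x y‖ = ‖w y x‖ := by rw [hsym x y]; exact RCLike.norm_conj _
  calc ‖w x y‖ * ‖w x y‖ = ‖w x y‖ * ‖w y x‖ := by rw [← h1]
    _ ≤ (w y y).re * (w x x).re := h
    _ = (w x x).re * (w y y).re := mul_comm _ _

lemma tent_cont (c : ℝ) : Continuous (fun x : ℝ => c * max 0 (1 - c * |x|)) := by fun_prop

lemma tent_integral {c : ℝ} (hc : 1 ≤ c) :
    ∫ x in Set.Icc (-1 : ℝ) 1, c * max 0 (1 - c * |x|) = 1 := by
  have hc0 : 0 < c := lt_of_lt_of_le one_pos hc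
  set f : ℝ → ℝ := fun x => c * max 0 (1 - c * |x|) with hf
  have hint : ∀ a b : ℝ, IntervalIntegrable f volume a b :=
    fun a b => (tent_cont c).intervalIntegrable a b
  rw [MeasureTheory.integral_Icc_eq_integral_Ioc,
    ← intervalIntegral.integral_of_le (by norm_num : (-1 : ℝ) ≤ 1)]
  set δ : ℝ := 1 / c with hδ
  have hδ0 : 0 < δ := by positivity
  have hδ1 : δ ≤ 1 := by rw [hδ]; rw [div_le_one hc0]; exact hc
  have h01 : ∫ x in (0:ℝ)..1, f x = 1/2 := by
    have hsplit : (∫ x in (0:ℝ)..δ, f x) + (∫ x in δ..(1:ℝ), f x) = ∫ x in (0:ℝ)..1, f x :=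
      intervalIntegral.integral_add_adjacent_intervals (hint _ _) (hint _ _)
    have h1 : ∫ x in (0:ℝ)..δ, f x = 1/2 := by
      have : ∫ x in (0:ℝ)..δ, f x = ∫ x in (0:ℝ)..δ, (c - c^2 * x) := by
        apply intervalIntegral.integral_congr
        intro x hx
        rw [Set.uIcc_of_le hδ0.le] at hx
        have hx0 : 0 ≤ x := hx.1
        have hxδ : x ≤ δ := hx.2
        have h1 : c * x ≤ 1 := by
          calc c * x ≤ c * δ := by nlinarith
            _ = 1 := by rw [hδ, mul_one_div_cancel hc0.ne']
        simp only [hf, abs_of_nonneg hx0]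
        rw [max_eq_right (by linarith)]
        ring
      rw [this,
        intervalIntegral.integral_sub (f := fun _ => (c:ℝ)) (g := fun x => c^2 * x)
          intervalIntegrable_const ((continuous_const.mul continuous_id').intervalIntegrable _ _),
        intervalIntegral.integral_const, intervalIntegral.integral_const_mul,
        integral_id]
      have hcδ : c * δ = 1 := by rw [hδ, mul_one_div_cancel hc0.ne']
      field_simp [hδ]
      linear_combination (1 - c * δ) * hcδ
    have h2 : ∫ x in δ..(1:ℝ), f x = 0 := by
      have : ∫ x in δ..(1:ℝ), f x = ∫ x in δ..(1:ℝ), (0:ℝ) := by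
        apply intervalIntegral.integral_congr
        intro x hx
        rw [Set.uIcc_of_le hδ1] at hx
        have : 1 ≤ c * x := by
          have : δ ≤ x := hx.1
          calc (1:ℝ) = c * δ := by rw [hδ, mul_one_div_cancel hc0.ne']
            _ ≤ c * x := by nlinarith
        have hxnn : (0:ℝ) ≤ x := le_trans hδ0.le hx.1
        simp only [hf, abs_of_nonneg hxnn]
        rw [max_eq_left (by linarith)]
        ring
      rw [this, intervalIntegral.integral_zero]
    linarith [hsplit]
  have hneg : ∫ x in (-1 : ℝ)..0, f x = ∫ x in (0:ℝ)..1, f x := by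
    have := intervalIntegral.integral_comp_neg (a := (0:ℝ)) (b := 1) f
    simp only [neg_zero] at this
    rw [← this]
    apply intervalIntegral.integral_congr
    intro x _
    simp [hf, abs_neg]
  have hsplit : (∫ x in (-1:ℝ)..0, f x) + (∫ x in (0:ℝ)..1, f x) = ∫ x in (-1:ℝ)..1, f x :=
    intervalIntegral.integral_add_adjacent_intervals (hint _ _) (hint _ _)
  rw [← hsplit, hneg, h01]; norm_num

noncomputable def tent (n : ℕ) (x : ℝ) : ℝ := ((n:ℝ)+1) * max 0 (1 - ((n:ℝ)+1) * |x|)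

lemma tent_cont' (n : ℕ) : Continuous (tent n) := by unfold tent; fun_prop

lemma peak_conv {g : ℝ → ℂ} (hg : Continuous g) :
    Tendsto (fun n => ∫ x in Set.Icc (-1:ℝ) 1, tent n x • g x) atTop (𝓝 (g 0)) := by
  apply tendsto_setIntegral_peak_smul_of_integrableOn_of_tendsto
    (x₀ := (0:ℝ)) measurableSet_Icc measurableSet_Icc (subset_refl _) self_mem_nhdsWithin
  · exact (measure_Icc_lt_top).ne
  · exact Eventually.of_forall fun n x _ => by unfold tent; positivity
  · intro u hu h0u
    obtain ⟨r, hr, hball⟩ := Metric.isOpen_iff.1 hu 0 h0u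
    rw [Metric.tendstoUniformlyOn_iff]
    intro ε hε
    filter_upwards [eventually_ge_atTop ⌈1/r⌉₊] with n hn x hx
    have hxr : r ≤ |x| := by
      have : x ∉ Metric.ball 0 r := fun h => hx.2 (hball h)
      simpa [Real.dist_eq] using this
    have hcr : 1 ≤ ((n:ℝ)+1) * |x| := by
      have h1 : 1/r ≤ (n:ℝ) := le_trans (Nat.le_ceil _) (by exact_mod_cast hn)
      rw [div_le_iff₀ hr] at h1
      nlinarith [abs_nonneg x]
    have : tent n x = 0 := by
      unfold tent
      rw [max_eq_left (by linarith)]; ring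
    simpa [this] using hε
  · have heq : (fun n => ∫ x in Set.Icc (-1:ℝ) 1, tent n x) = fun _ => (1:ℝ) := by
      funext n
      exact tent_integral (le_add_of_nonneg_left (Nat.cast_nonneg n))
    rw [heq]
    exact tendsto_const_nhds
  · exact Eventually.of_forall fun n => (tent_cont' n).aestronglyMeasurable
  · exact hg.integrableOn_Icc
  · exact (hg.tendsto 0).mono_left nhdsWithin_le_nhds

lemma integrable_subtype_iff {s : Set ℝ} (hs : MeasurableSet s) (f : ℝ → ℝ) :
    Integrable (fun x : s => f x) ↔ IntegrableOn f s := by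
  rw [IntegrableOn, ← map_comap_subtype_coe hs volume,
    (MeasurableEmbedding.subtype_coe hs).integrable_map_iff]
  rfl

/-- **Example.** On `D = C([-1,1]; ℂ)` with `s (φ, ψ) = φ(0) conj (ψ(0))` and
`t (φ, ψ) = ∫ φ conj ψ dλ`: (a) there is a sequence `(φ n)` in `D` with
`φ(0) = lim_n ∫ φ conj (φ n) dλ` for every `φ` (pseudo-absolute continuity of `s`
with respect to `t`), while (b) the forms `s` and `t` are mutually singular: any
nonnegative Hermitian form `w` with `w ≤ s` and `w ≤ t` on the diagonal vanishes. -/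
theorem pseudo_abs_continuity_not_abs_continuity
    (s t : C(Set.Icc (-1 : ℝ) 1, ℂ) → C(Set.Icc (-1 : ℝ) 1, ℂ) → ℂ)
    (hs : ∀ φ ψ : C(Set.Icc (-1 : ℝ) 1, ℂ),
      s φ ψ = φ ⟨0, by norm_num⟩ * (starRingEnd ℂ) (ψ ⟨0, by norm_num⟩))
    (ht : ∀ φ ψ : C(Set.Icc (-1 : ℝ) 1, ℂ),
      t φ ψ = ∫ x : Set.Icc (-1 : ℝ) 1, φ x * (starRingEnd ℂ) (ψ x)) :
    (∃ φs : ℕ → C(Set.Icc (-1 : ℝ) 1, ℂ),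
      ∀ φ : C(Set.Icc (-1 : ℝ) 1, ℂ),
        Tendsto (fun n => t φ (φs n)) atTop (𝓝 (φ ⟨0, by norm_num⟩))) ∧
    (∀ w : C(Set.Icc (-1 : ℝ) 1, ℂ) → C(Set.Icc (-1 : ℝ) 1, ℂ) → ℂ,
      IsNonnegHermForm w →
      (∀ φ, (w φ φ).re ≤ (s φ φ).re) →
      (∀ φ, (w φ φ).re ≤ (t φ φ).re) →
      ∀ φ ψ, w φ ψ = 0) := by
  have h11 : (-1 : ℝ) ≤ 1 := by norm_num
  constructor
  · -- part (a)
    refine ⟨fun n => ⟨fun x => ((tent n x.1 : ℝ) : ℂ),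
      Complex.continuous_ofReal.comp ((tent_cont' n).comp continuous_subtype_val)⟩, ?_⟩
    intro φ
    set g : ℝ → ℂ := Set.IccExtend h11 φ with hg
    have hgc : Continuous g := φ.continuous.Icc_extend'
    have hg0 : g 0 = φ ⟨0, by norm_num⟩ := Set.IccExtend_of_mem h11 φ (by norm_num)
    have key : ∀ n, t φ ⟨fun x => ((tent n x.1 : ℝ) : ℂ),
        Complex.continuous_ofReal.comp ((tent_cont' n).comp continuous_subtype_val)⟩
        = ∫ x in Set.Icc (-1:ℝ) 1, tent n x • g x := by
      intro n
      rw [ht, ← MeasureTheory.integral_subtype measurableSet_Icc (fun r => tent n r • g r)]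
      congr 1
      funext x
      show φ x * (starRingEnd ℂ) ((tent n x.1 : ℝ) : ℂ) = tent n x.1 • g x.1
      rw [Complex.conj_ofReal, Complex.real_smul, hg, Set.IccExtend_val, mul_comm]
    have h2 := peak_conv hgc
    rw [hg0] at h2
    exact h2.congr fun n => (key n).symm
  · -- part (b)
    intro w hw hws hwt
    obtain ⟨hadd, hsmul, hsym, hpos⟩ := hw
    have hdiag : ∀ φ, (w φ φ).re = 0 := by
      intro φ
      have hb : ∀ δ : ℝ, 0 < δ → δ ≤ 1 → (w φ φ).re ≤ 2 * δ * ‖φ‖^2 := by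
        intro δ hδpos hδ1
        set χ : C(Set.Icc (-1:ℝ) 1, ℂ) :=
          ⟨fun x => ((max 0 (1 - |x.1|/δ) : ℝ) : ℂ), by fun_prop⟩ with hχ
        set b := φ * χ with hbdef
        set a := φ - b with hadef
        have hab : a + b = φ := sub_add_cancel φ b
        have ha0 : a ⟨0, by norm_num⟩ = 0 := by
          simp only [hadef, hbdef, hχ, ContinuousMap.sub_apply, ContinuousMap.mul_apply,
            ContinuousMap.coe_mk]
          norm_num
        have hwaa : (w a a).re = 0 := by
          refine le_antisymm ?_ (hpos a)
          have := hws a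
          rwa [hs, ha0, zero_mul, Complex.zero_re] at this
        have hwab : w a b = 0 := by
          have hcs := herm_cs ⟨hadd, hsmul, hsym, hpos⟩ a b
          rw [hwaa, zero_mul] at hcs
          have h0 : ‖w a b‖ = 0 := by nlinarith [norm_nonneg (w a b)]
          exact norm_eq_zero.1 h0
        have hwba : w b a = 0 := by rw [hsym b a, hwab, map_zero]
        have hexp : w φ φ = w a a + w a b + (w b a + w b b) := by
          rw [← hab, hadd, herm_add_right ⟨hadd, hsmul, hsym, hpos⟩,
            herm_add_right ⟨hadd, hsmul, hsym, hpos⟩]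
        have hre : (w φ φ).re = (w b b).re := by
          rw [hexp, hwab, hwba]
          simp [Complex.add_re, hwaa]
        have htb : (t b b).re ≤ 2 * δ * ‖φ‖^2 := by
          have hbb : t b b = ((∫ x : Set.Icc (-1:ℝ) 1, ‖b x‖^2 : ℝ) : ℂ) := by
            rw [ht]
            have heq : (fun x : Set.Icc (-1:ℝ) 1 => b x * (starRingEnd ℂ) (b x))
                = fun x => ((‖b x‖^2 : ℝ) : ℂ) := by
              funext x
              rw [Complex.mul_conj']
              push_cast
              ring
            rw [heq]
            exact integral_ofReal
          rw [hbb, Complex.ofReal_re]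
          set G : ℝ → ℝ := Set.indicator (Set.Icc (-δ) δ) (fun _ => ‖φ‖^2) with hG
          have hGint : Integrable (fun x : Set.Icc (-1:ℝ) 1 => G x.1) := by
            rw [integrable_subtype_iff measurableSet_Icc]
            exact (integrableOn_const measure_Icc_lt_top.ne).indicator measurableSet_Icc
          have hle : ∀ x : Set.Icc (-1:ℝ) 1, ‖b x‖^2 ≤ G x.1 := by
            intro x
            by_cases hx : x.1 ∈ Set.Icc (-δ) δ
            · rw [hG, Set.indicator_of_mem hx]
              have hχle : ‖χ x‖ ≤ 1 := by
                rw [hχ]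
                show ‖((max 0 (1 - |x.1|/δ) : ℝ) : ℂ)‖ ≤ 1
                rw [Complex.norm_real, Real.norm_eq_abs,
                  abs_of_nonneg (le_max_left _ _)]
                refine max_le zero_le_one ?_
                have : 0 ≤ |x.1|/δ := by positivity
                linarith
              have hbx : ‖b x‖ ≤ ‖φ‖ := by
                rw [hbdef]
                show ‖φ x * χ x‖ ≤ ‖φ‖
                rw [norm_mul]
                calc ‖φ x‖ * ‖χ x‖ ≤ ‖φ‖ * 1 :=
                  mul_le_mul (φ.norm_coe_le_norm x) hχle (norm_nonneg _) (norm_nonneg _)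
                  _ = ‖φ‖ := mul_one _
              exact pow_le_pow_left₀ (norm_nonneg _) hbx 2
            · rw [hG, Set.indicator_of_notMem hx]
              have hδx : δ < |x.1| := by
                simp only [Set.mem_Icc, not_and_or, not_le] at hx
                rcases hx with h | h
                · calc δ < -x.1 := by linarith
                    _ ≤ |x.1| := neg_le_abs _
                · exact lt_of_lt_of_le h (le_abs_self _)
              have hχ0 : χ x = 0 := by
                rw [hχ]
                show ((max 0 (1 - |x.1|/δ) : ℝ) : ℂ) = 0
                rw [max_eq_left]
                · norm_num
                · have : 1 < |x.1|/δ := (one_lt_div hδpos).2 hδx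
                  linarith
              have : b x = 0 := by
                rw [hbdef]
                show φ x * χ x = 0
                rw [hχ0, mul_zero]
              simp [this]
          have h0 : ∀ x : Set.Icc (-1:ℝ) 1, 0 ≤ ‖b x‖^2 := fun x => sq_nonneg _
          calc ∫ x : Set.Icc (-1:ℝ) 1, ‖b x‖^2
              ≤ ∫ x : Set.Icc (-1:ℝ) 1, G x.1 :=
                integral_mono_of_nonneg (Eventually.of_forall h0) hGint (Eventually.of_forall hle)
            _ = ∫ r in Set.Icc (-1:ℝ) 1, G r := MeasureTheory.integral_subtype measurableSet_Icc G
            _ = ∫ r in Set.Icc (-1:ℝ) 1 ∩ Set.Icc (-δ) δ, ‖φ‖^2 := by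
                rw [hG, setIntegral_indicator measurableSet_Icc]
            _ = (volume (Set.Icc (-1:ℝ) 1 ∩ Set.Icc (-δ) δ)).toReal * ‖φ‖^2 := by
                rw [setIntegral_const, smul_eq_mul, measureReal_def]
            _ ≤ 2 * δ * ‖φ‖^2 := by
                have hv : (volume (Set.Icc (-1:ℝ) 1 ∩ Set.Icc (-δ) δ)).toReal ≤ 2 * δ := by
                  have h1 : volume (Set.Icc (-1:ℝ) 1 ∩ Set.Icc (-δ) δ)
                      ≤ volume (Set.Icc (-δ) δ) := measure_mono Set.inter_subset_right
                  have h2 : volume (Set.Icc (-δ) δ) = ENNReal.ofReal (2*δ) := by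
                    rw [Real.volume_Icc]; congr 1; ring
                  calc (volume (Set.Icc (-1:ℝ) 1 ∩ Set.Icc (-δ) δ)).toReal
                      ≤ (volume (Set.Icc (-δ) δ)).toReal := by
                        apply ENNReal.toReal_mono _ h1
                        rw [h2]; exact ENNReal.ofReal_ne_top
                    _ = 2*δ := by rw [h2, ENNReal.toReal_ofReal (by linarith)]
                exact mul_le_mul_of_nonneg_right hv (sq_nonneg _)
        calc (w φ φ).re = (w b b).re := hre
          _ ≤ (t b b).re := hwt b
          _ ≤ 2 * δ * ‖φ‖^2 := htb
      rcases eq_or_lt_of_le (hpos φ) with h | h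
      · exact h.symm
      · exfalso
        set r := (w φ φ).re with hr
        set δ : ℝ := min 1 (r / (2 * (‖φ‖^2 + 1))) with hδ
        have hδpos : 0 < δ := lt_min one_pos (by positivity)
        have hble := hb δ hδpos (min_le_left _ _)
        have hδle : δ ≤ r / (2 * (‖φ‖^2 + 1)) := min_le_right _ _
        have hlt : 2 * δ * ‖φ‖^2 < r := by
          have hfn : 0 < ‖φ‖^2 + 1 := by positivity
          rw [le_div_iff₀ (by positivity)] at hδle
          nlinarith [sq_nonneg ‖φ‖]
        linarith
    have hdiagC : ∀ φ, w φ φ = 0 := by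
      intro φ
      have him : (w φ φ).im = 0 := by
        have h1 := congrArg Complex.im (hsym φ φ)
        simp only [Complex.conj_im] at h1
        linarith
      exact Complex.ext (by simpa using hdiag φ) (by simpa using him)
    intro φ ψ
    have hcs := herm_cs ⟨hadd, hsmul, hsym, hpos⟩ φ ψ
    rw [hdiag φ, zero_mul] at hcs
    have h0 : ‖w φ ψ‖ = 0 := by nlinarith [norm_nonneg (w φ ψ)]
    exact norm_eq_zero.1 h0
end

section
/- Let α, β : R → [0,∞) be finitely additive set functions on a ring of sets R, with β bounded. If β is absolutely continuous with respect to α, then the form b is absolutely continuous with respect to the form a: for every sequence (φ_n) of R-simple functions with a(φ_n,φ_n) → 0 and b(φ_n − φ_m, φ_n − φ_m) → 0 as n,m → ∞, one has b(φ_n,φ_n) → 0. -/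
open Filter Topology

/-- The complex vector space of `R`-simple functions: the span of the indicator
functions `χ_E`, `E ∈ R`. -/
noncomputable def simpleSpan (T : Type*) (R : Set (Set T)) : Submodule ℂ (T → ℂ) :=
  Submodule.span ℂ {f | ∃ E ∈ R, f = E.indicator (fun _ => (1 : ℂ))}

/-- The indicator of a member of `R` belongs to the space of `R`-simple functions. -/
theorem indicator_mem_simpleSpan {T : Type*} {R : Set (Set T)} {E : Set T} (hE : E ∈ R) :
    E.indicator (fun _ => (1 : ℂ)) ∈ simpleSpan T R :=
  Submodule.subset_span ⟨E, hE, rfl⟩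



section FormLemmas

variable {D : Type*} [AddCommGroup D] [Module ℂ D] {s : D → D → ℂ}

lemma form_zero_left (hs : IsNonnegHermForm s) (y : D) : s 0 y = 0 := by
  have h := hs.1 0 0 y
  rw [add_zero] at h
  exact (left_eq_add.mp h)

lemma form_add_right (hs : IsNonnegHermForm s) (x y z : D) :
    s x (y + z) = s x y + s x z := by
  rw [hs.2.2.1 x (y + z), hs.1, map_add, ← hs.2.2.1, ← hs.2.2.1]

lemma form_smul_right (hs : IsNonnegHermForm s) (c : ℂ) (x y : D) :
    s x (c • y) = (starRingEnd ℂ) c * s x y := by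
  rw [hs.2.2.1 x (c • y), hs.2.1, map_mul, ← hs.2.2.1]

lemma form_sum_left (hs : IsNonnegHermForm s) {ι : Type*} (t : Finset ι) (f : ι → D) (y : D) :
    s (∑ i ∈ t, f i) y = ∑ i ∈ t, s (f i) y := by
  classical
  induction t using Finset.induction_on with
  | empty => simpa using form_zero_left hs y
  | insert _ _ hnot ih =>
      rw [Finset.sum_insert hnot, hs.1, ih, Finset.sum_insert hnot]

lemma form_sum_right (hs : IsNonnegHermForm s) {ι : Type*} (t : Finset ι) (f : ι → D) (x : D) :
    s x (∑ i ∈ t, f i) = ∑ i ∈ t, s x (f i) := by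
  rw [hs.2.2.1, form_sum_left hs, map_sum]
  exact Finset.sum_congr rfl fun i _ => (hs.2.2.1 x (f i)).symm

lemma form_diag_real (hs : IsNonnegHermForm s) (x : D) :
    s x x = (((s x x).re : ℝ) : ℂ) := by
  have h := (hs.2.2.1 x x).symm
  exact (Complex.conj_eq_iff_re.mp h).symm

/-- Cauchy–Schwarz for a nonnegative Hermitian form. -/
lemma form_cs (hs : IsNonnegHermForm s) (x y : D) :
    ‖s x y‖ * ‖s x y‖ ≤ (s x x).re * (s y y).re := by
  letI c : PreInnerProductSpace.Core ℂ D :=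
    { inner := fun u v => s v u
      conj_inner_symm := fun u v => (hs.2.2.1 v u).symm
      re_inner_nonneg := fun u => hs.2.2.2 u
      add_left := fun u v w => form_add_right hs w u v
      smul_left := fun u v r => form_smul_right hs r v u }
  have h := @InnerProductSpace.Core.inner_mul_inner_self_le ℂ D _ _ _ c x y
  change ‖s y x‖ * ‖s x y‖ ≤ (s x x).re * (s y y).re at h
  have h1 : ‖s y x‖ = ‖s x y‖ := by
    rw [hs.2.2.1 x y]
    simp
  calc ‖s x y‖ * ‖s x y‖ = ‖s y x‖ * ‖s x y‖ := by rw [h1]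
    _ ≤ (s x x).re * (s y y).re := h

lemma form_abs_le (hs : IsNonnegHermForm s) (x y : D) :
    ‖s x y‖ ≤ Real.sqrt ((s x x).re) * Real.sqrt ((s y y).re) := by
  have h := form_cs hs x y
  have h2 : ‖s x y‖ = Real.sqrt (‖s x y‖ * ‖s x y‖) := by
    rw [Real.sqrt_mul_self (norm_nonneg _)]
  rw [h2, ← Real.sqrt_mul (hs.2.2.2 x)]
  exact Real.sqrt_le_sqrt h

lemma form_expand (hs : IsNonnegHermForm s) (u w : D) :
    (s u u).re ≤ (s (u - w) (u - w)).re
      + 2 * Real.sqrt ((s (u - w) (u - w)).re) * Real.sqrt ((s w w).re)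
      + (s w w).re := by
  have hu : u = (u - w) + w := by abel
  have hexp : s u u = s (u - w) (u - w) + s (u - w) w + s w (u - w) + s w w := by
    calc s u u = s ((u - w) + w) ((u - w) + w) := by rw [← hu]
      _ = s (u - w) ((u - w) + w) + s w ((u - w) + w) := hs.1 _ _ _
      _ = s (u - w) (u - w) + s (u - w) w + (s w (u - w) + s w w) := by
          rw [form_add_right hs, form_add_right hs]
      _ = s (u - w) (u - w) + s (u - w) w + s w (u - w) + s w w := by ring
  have hsym : (s w (u - w)).re = (s (u - w) w).re := by
    rw [hs.2.2.1 w (u - w)]; simp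
  have hre : (s u u).re = (s (u - w) (u - w)).re + 2 * (s (u - w) w).re + (s w w).re := by
    rw [hexp]; simp [hsym]; ring
  have hb : (s (u - w) w).re ≤ Real.sqrt ((s (u - w) (u - w)).re) * Real.sqrt ((s w w).re) :=
    le_trans (Complex.re_le_norm _) (form_abs_le hs _ _)
  rw [hre]; nlinarith [hb]

end FormLemmas
section RingLemmas

variable {T : Type*} {R : Set (Set T)}

lemma ring_empty_mem (hne : R.Nonempty) (hdiff : ∀ E ∈ R, ∀ F ∈ R, E \ F ∈ R) :
    ∅ ∈ R := by
  obtain ⟨E, hE⟩ := hne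
  have := hdiff E hE E hE
  simpa using this

lemma ring_inter_mem (hdiff : ∀ E ∈ R, ∀ F ∈ R, E \ F ∈ R)
    {E F : Set T} (hE : E ∈ R) (hF : F ∈ R) : E ∩ F ∈ R := by
  have h : E ∩ F = E \ (E \ F) := by
    ext t; simp only [Set.mem_inter_iff, Set.mem_diff]; tauto
  rw [h]
  exact hdiff E hE _ (hdiff E hE F hF)

lemma ring_biUnion_mem (hne : R.Nonempty)
    (hunion : ∀ E ∈ R, ∀ F ∈ R, E ∪ F ∈ R) (hdiff : ∀ E ∈ R, ∀ F ∈ R, E \ F ∈ R)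
    {ι : Type*} [DecidableEq ι] (t : Finset ι) (G : ι → Set T) (hG : ∀ i ∈ t, G i ∈ R) :
    (⋃ i ∈ t, G i) ∈ R := by
  induction t using Finset.induction_on with
  | empty => simpa using ring_empty_mem hne hdiff
  | @insert j t hnot ih =>
      rw [Finset.set_biUnion_insert]
      exact hunion _ (hG j (Finset.mem_insert_self j t)) _
        (ih fun i hi => hG i (Finset.mem_insert_of_mem hi))

lemma addfun_empty (hne : R.Nonempty) (hdiff : ∀ E ∈ R, ∀ F ∈ R, E \ F ∈ R)
    {μ : Set T → ℝ}
    (hadd : ∀ E ∈ R, ∀ F ∈ R, Disjoint E F → μ (E ∪ F) = μ E + μ F) :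
    μ ∅ = 0 := by
  have h_empty := ring_empty_mem hne hdiff
  have := hadd ∅ h_empty ∅ h_empty (by simp)
  simp at this
  linarith

lemma addfun_mono (hdiff : ∀ E ∈ R, ∀ F ∈ R, E \ F ∈ R)
    {μ : Set T → ℝ} (h0 : ∀ E ∈ R, 0 ≤ μ E)
    (hadd : ∀ E ∈ R, ∀ F ∈ R, Disjoint E F → μ (E ∪ F) = μ E + μ F)
    {E F : Set T} (hE : E ∈ R) (hF : F ∈ R) (hsub : F ⊆ E) : μ F ≤ μ E := by
  have hEF : E \ F ∈ R := hdiff E hE F hF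
  have hdisj : Disjoint F (E \ F) := Set.disjoint_sdiff_right
  have hun : F ∪ (E \ F) = E := Set.union_diff_cancel hsub
  have := hadd F hF (E \ F) hEF hdisj
  rw [hun] at this
  have := h0 (E \ F) hEF
  linarith

lemma addfun_biUnion (hne : R.Nonempty)
    (hunion : ∀ E ∈ R, ∀ F ∈ R, E ∪ F ∈ R) (hdiff : ∀ E ∈ R, ∀ F ∈ R, E \ F ∈ R)
    {μ : Set T → ℝ}
    (hadd : ∀ E ∈ R, ∀ F ∈ R, Disjoint E F → μ (E ∪ F) = μ E + μ F)
    {ι : Type*} [DecidableEq ι] (t : Finset ι) (G : ι → Set T) (hG : ∀ i ∈ t, G i ∈ R)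
    (hdisj : ∀ i ∈ t, ∀ j ∈ t, i ≠ j → Disjoint (G i) (G j)) :
    μ (⋃ i ∈ t, G i) = ∑ i ∈ t, μ (G i) := by
  induction t using Finset.induction_on with
  | empty => simpa using addfun_empty hne hdiff hadd
  | @insert j t hnot ih =>
      rw [Finset.set_biUnion_insert, Finset.sum_insert hnot]
      have hGj : G j ∈ R := hG j (Finset.mem_insert_self j t)
      have hGt : ∀ i ∈ t, G i ∈ R := fun i hi => hG i (Finset.mem_insert_of_mem hi)
      have hUt : (⋃ i ∈ t, G i) ∈ R := ring_biUnion_mem hne hunion hdiff t G hGt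
      have hd : Disjoint (G j) (⋃ i ∈ t, G i) := by
        rw [Set.disjoint_iUnion_right]
        intro i
        rw [Set.disjoint_iUnion_right]
        intro hi
        exact hdisj j (Finset.mem_insert_self j t) i (Finset.mem_insert_of_mem hi)
          (fun h => hnot (h ▸ hi))
      rw [hadd _ hGj _ hUt hd,
        ih hGt (fun i hi j' hj' hij => hdisj i (Finset.mem_insert_of_mem hi) j'
          (Finset.mem_insert_of_mem hj') hij)]


end RingLemmas

section Partition

variable {T : Type*} {R : Set (Set T)}

/-- Every simple function admits a finite partition into members of `R` on which it is
constant, and off which it vanishes. -/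
lemma exists_partition (hne : R.Nonempty)
    (hunion : ∀ E ∈ R, ∀ F ∈ R, E ∪ F ∈ R) (hdiff : ∀ E ∈ R, ∀ F ∈ R, E \ F ∈ R)
    {x : T → ℂ} (hx : x ∈ simpleSpan T R) :
    ∃ (ι : Type) (_ : Finite ι) (F : ι → Set T),
      (∀ i, F i ∈ R) ∧ (∀ i j, i ≠ j → Disjoint (F i) (F j)) ∧
      (∀ t, t ∉ ⋃ i, F i → x t = 0) ∧
      (∀ i, ∀ t ∈ F i, ∀ t' ∈ F i, x t = x t') := by
  classical
  induction hx using Submodule.span_induction with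
  | mem f hf =>
      obtain ⟨E, hE, rfl⟩ := hf
      refine ⟨PUnit, inferInstance, fun _ => E, fun _ => hE, ?_, ?_, ?_⟩
      · intro i j hij; exact absurd rfl hij
      · intro t ht
        have : t ∉ E := by simpa using ht
        simp [Set.indicator_of_notMem this]
      · intro i t ht t' ht'
        simp only [Set.iUnion_const] at *
        rw [Set.indicator_of_mem ht, Set.indicator_of_mem ht']
  | zero =>
      exact ⟨PEmpty, inferInstance, fun i => i.elim, fun i => i.elim, fun i => i.elim,
        fun t _ => rfl, fun i => i.elim⟩
  | add u v hu hv ihu ihv =>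
      obtain ⟨ι₁, hfin1, F, hF, hFd, hFv, hFc⟩ := ihu
      obtain ⟨ι₂, hfin2, G, hG, hGd, hGv, hGc⟩ := ihv
      haveI := hfin1; haveI := hfin2
      haveI : Fintype ι₁ := Fintype.ofFinite ι₁
      haveI : Fintype ι₂ := Fintype.ofFinite ι₂
      have hUF : (⋃ i, F i) ∈ R := by
        have := ring_biUnion_mem hne hunion hdiff (Finset.univ : Finset ι₁) F
          (fun i _ => hF i)
        simpa using this
      have hUG : (⋃ j, G j) ∈ R := by
        have := ring_biUnion_mem hne hunion hdiff (Finset.univ : Finset ι₂) G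
          (fun j _ => hG j)
        simpa using this
      set H : (ι₁ × ι₂) ⊕ ι₁ ⊕ ι₂ → Set T :=
        Sum.elim (fun p => F p.1 ∩ G p.2)
          (Sum.elim (fun i => F i \ ⋃ j, G j) (fun j => G j \ ⋃ i, F i)) with hH
      refine ⟨(ι₁ × ι₂) ⊕ ι₁ ⊕ ι₂, inferInstance, H, ?_, ?_, ?_, ?_⟩
      · rintro (⟨i, j⟩ | i | j)
        · exact ring_inter_mem hdiff (hF i) (hG j)
        · exact hdiff _ (hF i) _ hUG
        · exact hdiff _ (hG j) _ hUF
      · -- pairwise disjoint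
        rintro (⟨i, j⟩ | i | j) (⟨i', j'⟩ | i' | j') hij <;>
          rw [Set.disjoint_left] <;> intro t h1 h2 <;>
          simp only [hH, Sum.elim_inl, Sum.elim_inr, Set.mem_inter_iff, Set.mem_diff,
            Set.mem_iUnion] at h1 h2
        · by_cases hii : i = i'
          · subst hii
            have hjj : j ≠ j' := fun h => hij (by rw [h])
            exact Set.disjoint_left.mp (hGd j j' hjj) h1.2 h2.2
          · exact Set.disjoint_left.mp (hFd i i' hii) h1.1 h2.1
        · exact h2.2 ⟨j, h1.2⟩
        · exact h2.2 ⟨i, h1.1⟩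
        · exact h1.2 ⟨j', h2.2⟩
        · have hii : i ≠ i' := fun h => hij (by rw [h])
          exact Set.disjoint_left.mp (hFd i i' hii) h1.1 h2.1
        · exact h2.2 ⟨i, h1.1⟩
        · exact h1.2 ⟨i', h2.1⟩
        · exact h1.2 ⟨i', h2.1⟩
        · have hjj : j ≠ j' := fun h => hij (by rw [h])
          exact Set.disjoint_left.mp (hGd j j' hjj) h1.1 h2.1
      · -- vanishing
        intro t ht
        have htF : t ∉ ⋃ i, F i := by
          intro hmem
          obtain ⟨i, hi⟩ := Set.mem_iUnion.mp hmem
          by_cases hg : t ∈ ⋃ j, G j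
          · obtain ⟨j, hj⟩ := Set.mem_iUnion.mp hg
            exact ht (Set.mem_iUnion.mpr ⟨Sum.inl (i, j), ⟨hi, hj⟩⟩)
          · exact ht (Set.mem_iUnion.mpr ⟨Sum.inr (Sum.inl i), ⟨hi, hg⟩⟩)
        have htG : t ∉ ⋃ j, G j := by
          intro hmem
          obtain ⟨j, hj⟩ := Set.mem_iUnion.mp hmem
          by_cases hf2 : t ∈ ⋃ i, F i
          · exact htF hf2
          · exact ht (Set.mem_iUnion.mpr ⟨Sum.inr (Sum.inr j), ⟨hj, hf2⟩⟩)
        simp [Pi.add_apply, hFv t htF, hGv t htG]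
      · -- constancy
        rintro (⟨i, j⟩ | i | j) t ht t' ht' <;>
          simp only [hH, Sum.elim_inl, Sum.elim_inr, Set.mem_inter_iff, Set.mem_diff] at ht ht' <;>
          simp only [Pi.add_apply]
        · rw [hFc i t ht.1 t' ht'.1, hGc j t ht.2 t' ht'.2]
        · rw [hFc i t ht.1 t' ht'.1, hGv t (fun h => ht.2 (by simpa using h)),
            hGv t' (fun h => ht'.2 (by simpa using h))]
        · rw [hGc j t ht.1 t' ht'.1, hFv t (fun h => ht.2 (by simpa using h)),
            hFv t' (fun h => ht'.2 (by simpa using h))]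
  | smul c u hu ihu =>
      obtain ⟨ι₁, hfin1, F, hF, hFd, hFv, hFc⟩ := ihu
      exact ⟨ι₁, hfin1, F, hF, hFd, fun t ht => by simp [Pi.smul_apply, hFv t ht],
        fun i t ht t' ht' => by simp [Pi.smul_apply, hFc i t ht t' ht']⟩

end Partition

section Rep

variable {T : Type*} {R : Set (Set T)}

lemma exists_rep (hne : R.Nonempty)
    (hunion : ∀ E ∈ R, ∀ F ∈ R, E ∪ F ∈ R) (hdiff : ∀ E ∈ R, ∀ F ∈ R, E \ F ∈ R)
    (x0 : simpleSpan T R) :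
    ∃ (n : ℕ) (c : Fin n → ℂ) (F : Fin n → Set T) (hF : ∀ i, F i ∈ R),
      (∀ i j, i ≠ j → Disjoint (F i) (F j)) ∧
      x0 = ∑ i, c i • (⟨(F i).indicator (fun _ => (1 : ℂ)),
        indicator_mem_simpleSpan (hF i)⟩ : simpleSpan T R) := by
  classical
  obtain ⟨ι, hfin, F0, hF0, hd0, hv0, hc0⟩ := exists_partition hne hunion hdiff x0.2
  haveI := hfin
  obtain ⟨n, ⟨e⟩⟩ := Finite.exists_equiv_fin ι
  set F : Fin n → Set T := fun i => F0 (e.symm i) with hFdef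
  have hF : ∀ i, F i ∈ R := fun i => hF0 _
  have hd : ∀ i j, i ≠ j → Disjoint (F i) (F j) := fun i j hij =>
    hd0 _ _ (fun h => hij (by simpa using congrArg e h))
  set c : Fin n → ℂ := fun i =>
    if h : (F i).Nonempty then x0.val h.choose else 0 with hcdef
  refine ⟨n, c, F, hF, hd, ?_⟩
  apply Subtype.ext
  have hcoe : ((∑ i, c i • (⟨(F i).indicator (fun _ => (1 : ℂ)),
      indicator_mem_simpleSpan (hF i)⟩ : simpleSpan T R) : simpleSpan T R) : T → ℂ)
      = ∑ i, c i • (F i).indicator (fun _ => (1 : ℂ)) := by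
    push_cast
    rfl
  rw [hcoe]
  funext t
  rw [Finset.sum_apply]
  by_cases ht : ∃ i, t ∈ F i
  · obtain ⟨i₀, hi₀⟩ := ht
    rw [Finset.sum_eq_single i₀]
    · have hne' : (F i₀).Nonempty := ⟨t, hi₀⟩
      have hch : hne'.choose ∈ F i₀ := hne'.choose_spec
      simp only [Pi.smul_apply, Set.indicator_of_mem hi₀, smul_eq_mul, mul_one]
      rw [hcdef]
      simp only [dif_pos hne']
      exact (hc0 (e.symm i₀) _ hch t hi₀).symm
    · intro j _ hj
      have : t ∉ F j := fun h => Set.disjoint_left.mp (hd j i₀ hj) h hi₀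
      simp [Set.indicator_of_notMem this]
    · intro h; exact absurd (Finset.mem_univ i₀) h
  · have htot : t ∉ ⋃ i, F0 i := by
      intro hmem
      obtain ⟨i, hi⟩ := Set.mem_iUnion.mp hmem
      exact ht ⟨e i, by simpa [hFdef] using hi⟩
    rw [hv0 t htot]
    symm
    apply Finset.sum_eq_zero
    intro j _
    have : t ∉ F j := fun h => ht ⟨j, h⟩
    simp [Set.indicator_of_notMem this]

end Rep
section Eval

variable {T : Type*} {R : Set (Set T)}

lemma form_eval_ind {s : simpleSpan T R → simpleSpan T R → ℂ} (hs : IsNonnegHermForm s)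
    {μ : Set T → ℝ}
    (hpair : ∀ (E : Set T) (hE : E ∈ R) (F : Set T) (hF : F ∈ R),
      s ⟨E.indicator (fun _ => (1 : ℂ)), indicator_mem_simpleSpan hE⟩
        ⟨F.indicator (fun _ => (1 : ℂ)), indicator_mem_simpleSpan hF⟩ = (μ (E ∩ F) : ℂ))
    {x0 : simpleSpan T R} {n : ℕ} {c : Fin n → ℂ} {F : Fin n → Set T} (hF : ∀ i, F i ∈ R)
    (hx : x0 = ∑ i, c i • (⟨(F i).indicator (fun _ => (1 : ℂ)),
        indicator_mem_simpleSpan (hF i)⟩ : simpleSpan T R))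
    {E : Set T} (hE : E ∈ R) :
    s x0 ⟨E.indicator (fun _ => (1 : ℂ)), indicator_mem_simpleSpan hE⟩
      = ∑ i, c i * (μ (F i ∩ E) : ℂ) := by
  rw [hx, form_sum_left hs]
  refine Finset.sum_congr rfl fun i _ => ?_
  rw [hs.2.1, hpair _ (hF i) _ hE]

lemma form_eval_diag {s : simpleSpan T R → simpleSpan T R → ℂ} (hs : IsNonnegHermForm s)
    {μ : Set T → ℝ} (hμ0 : μ ∅ = 0)
    (hpair : ∀ (E : Set T) (hE : E ∈ R) (F : Set T) (hF : F ∈ R),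
      s ⟨E.indicator (fun _ => (1 : ℂ)), indicator_mem_simpleSpan hE⟩
        ⟨F.indicator (fun _ => (1 : ℂ)), indicator_mem_simpleSpan hF⟩ = (μ (E ∩ F) : ℂ))
    {x0 : simpleSpan T R} {n : ℕ} {c : Fin n → ℂ} {F : Fin n → Set T} (hF : ∀ i, F i ∈ R)
    (hd : ∀ i j, i ≠ j → Disjoint (F i) (F j))
    (hx : x0 = ∑ i, c i • (⟨(F i).indicator (fun _ => (1 : ℂ)),
        indicator_mem_simpleSpan (hF i)⟩ : simpleSpan T R)) :
    (s x0 x0).re = ∑ i, Complex.normSq (c i) * μ (F i) := by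
  classical
  have h1 : s x0 x0 = ((∑ i, Complex.normSq (c i) * μ (F i) : ℝ) : ℂ) := by
    nth_rewrite 1 [hx]
    rw [form_sum_left hs]
    have hinner : ∀ i : Fin n,
        s (c i • (⟨(F i).indicator (fun _ => (1 : ℂ)),
          indicator_mem_simpleSpan (hF i)⟩ : simpleSpan T R)) x0
        = (Complex.normSq (c i) : ℂ) * (μ (F i) : ℂ) := by
      intro i
      rw [hs.2.1, hx, form_sum_right hs]
      have hterm : ∀ j : Fin n,
          s (⟨(F i).indicator (fun _ => (1 : ℂ)), indicator_mem_simpleSpan (hF i)⟩ :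
              simpleSpan T R)
            (c j • (⟨(F j).indicator (fun _ => (1 : ℂ)),
              indicator_mem_simpleSpan (hF j)⟩ : simpleSpan T R))
          = (starRingEnd ℂ) (c j) * (μ (F i ∩ F j) : ℂ) := by
        intro j
        rw [form_smul_right hs, hpair _ (hF i) _ (hF j)]
      rw [Finset.sum_congr rfl fun j _ => hterm j]
      rw [Finset.sum_eq_single i]
      · rw [Set.inter_self, ← Complex.mul_conj]
        ring
      · intro j _ hj
        have : F i ∩ F j = ∅ :=
          Set.disjoint_iff_inter_eq_empty.mp (hd i j (fun h => hj h.symm))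
        rw [this, hμ0]
        simp
      · intro h; exact absurd (Finset.mem_univ i) h
    rw [Finset.sum_congr rfl fun i _ => hinner i]
    push_cast
    rfl
  rw [h1, Complex.ofReal_re]

end Eval


set_option maxHeartbeats 1600000 in
/-- **Lemma.** If the bounded nonnegative finitely additive set function `β` on a ring of
sets `R` is absolutely continuous with respect to the nonnegative finitely additive set
function `α`, then the associated form `b` is absolutely continuous with respect to the
associated form `a`. -/
theorem form_abs_continuous_of_set_function_abs_continuous
    {T : Type*} (R : Set (Set T))
    (hne : R.Nonempty)
    (hunion : ∀ E ∈ R, ∀ F ∈ R, E ∪ F ∈ R)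
    (hdiff : ∀ E ∈ R, ∀ F ∈ R, E \ F ∈ R)
    (α β : Set T → ℝ)
    (hα0 : ∀ E ∈ R, 0 ≤ α E)
    (hαadd : ∀ E ∈ R, ∀ F ∈ R, Disjoint E F → α (E ∪ F) = α E + α F)
    (hβ0 : ∀ E ∈ R, 0 ≤ β E)
    (hβadd : ∀ E ∈ R, ∀ F ∈ R, Disjoint E F → β (E ∪ F) = β E + β F)
    (hβbdd : ∃ M : ℝ, ∀ E ∈ R, β E ≤ M)
    (hac : ∀ ε : ℝ, 0 < ε → ∃ δ : ℝ, 0 < δ ∧ ∀ E ∈ R, α E < δ → β E < ε)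
    (a b : simpleSpan T R → simpleSpan T R → ℂ)
    (haform : IsNonnegHermForm a) (hbform : IsNonnegHermForm b)
    (ha : ∀ (E : Set T) (hE : E ∈ R) (F : Set T) (hF : F ∈ R),
      a ⟨E.indicator (fun _ => (1 : ℂ)), indicator_mem_simpleSpan hE⟩
        ⟨F.indicator (fun _ => (1 : ℂ)), indicator_mem_simpleSpan hF⟩ = (α (E ∩ F) : ℂ))
    (hb : ∀ (E : Set T) (hE : E ∈ R) (F : Set T) (hF : F ∈ R),
      b ⟨E.indicator (fun _ => (1 : ℂ)), indicator_mem_simpleSpan hE⟩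
        ⟨F.indicator (fun _ => (1 : ℂ)), indicator_mem_simpleSpan hF⟩ = (β (E ∩ F) : ℂ)) :
    FormAC b a := by
  classical
  intro x hA hB
  set A : ℕ → ℝ := fun n => (a (x n) (x n)).re with hAdef
  set B : ℕ → ℝ := fun n => (b (x n) (x n)).re with hBdef
  have hβ_empty : β ∅ = 0 := addfun_empty hne hdiff hβadd
  have hα_empty : α ∅ = 0 := addfun_empty hne hdiff hαadd
  have hBnonneg : ∀ n, 0 ≤ B n := fun n => hbform.2.2.2 (x n)
  have hAre : Tendsto A atTop (𝓝 0) := by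
    have := (Complex.continuous_re.tendsto 0).comp hA
    simpa [hAdef, Function.comp_def] using this
  have hBC : Tendsto (fun p : ℕ × ℕ => (b (x p.1 - x p.2) (x p.1 - x p.2)).re)
      atTop (𝓝 0) := by
    have := (Complex.continuous_re.tendsto 0).comp hB
    simpa [Function.comp_def] using this
  suffices hgoal : Tendsto B atTop (𝓝 0) by
    have heq : (fun n => b (x n) (x n)) = fun n => ((B n : ℝ) : ℂ) := by
      funext n; exact form_diag_real hbform (x n)
    rw [heq]
    have := (Complex.continuous_ofReal.tendsto 0).comp hgoal
    simpa [Function.comp_def] using this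
  -- the key claim
  have claim : ∀ (E : Set T) (hE : E ∈ R) (C : ℝ), 0 ≤ C → ∀ εc : ℝ, 0 < εc →
      ∀ᶠ n in atTop, (B n ≤ C →
        ‖b (x n) ⟨E.indicator (fun _ => (1 : ℂ)), indicator_mem_simpleSpan hE⟩‖ < εc) := by
    intro E hE C hC εc hεc
    have hβE : 0 ≤ β E := hβ0 E hE
    set K : ℝ := εc / (2 * (β E + 1)) with hKdef
    have hK : 0 < K := div_pos hεc (by linarith)
    set q : ℝ := εc / (2 * (Real.sqrt C + 1)) with hqdef
    have hq : 0 < q := div_pos hεc (by nlinarith [Real.sqrt_nonneg C])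
    obtain ⟨δ, hδ, hδprop⟩ := hac (q ^ 2) (by positivity)
    have hAev : ∀ᶠ n in atTop, A n < δ * K ^ 2 :=
      hAre.eventually_lt_const (by positivity)
    filter_upwards [hAev] with n hAn hBn
    obtain ⟨nn, c, F, hF, hd, hx0⟩ := exists_rep hne hunion hdiff (x n)
    have hbind := form_eval_ind hbform hb hF hx0 hE
    have hBformula : B n = ∑ i, Complex.normSq (c i) * β (F i) :=
      form_eval_diag hbform hβ_empty hb hF hd hx0
    have hAformula : A n = ∑ i, Complex.normSq (c i) * α (F i) :=
      form_eval_diag haform hα_empty ha hF hd hx0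
    have hFiE : ∀ i, F i ∩ E ∈ R := fun i => ring_inter_mem hdiff (hF i) hE
    have hβFiE : ∀ i, 0 ≤ β (F i ∩ E) := fun i => hβ0 _ (hFiE i)
    have hdFiE : ∀ i j, i ≠ j → Disjoint (F i ∩ E) (F j ∩ E) := fun i j hij =>
      Set.disjoint_of_subset Set.inter_subset_left Set.inter_subset_left (hd i j hij)
    have h1 : ‖b (x n) ⟨E.indicator (fun _ => (1 : ℂ)), indicator_mem_simpleSpan hE⟩‖
        ≤ ∑ i, ‖c i‖ * β (F i ∩ E) := by
      rw [hbind]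
      refine le_trans (norm_sum_le _ _) (Finset.sum_le_sum fun i _ => ?_)
      rw [norm_mul, Complex.norm_real, Real.norm_eq_abs, abs_of_nonneg (hβFiE i)]
    set s₁ : Finset (Fin nn) := Finset.univ.filter (fun i => K < ‖c i‖) with hs₁
    set s₂ : Finset (Fin nn) := Finset.univ.filter (fun i => ¬ K < ‖c i‖) with hs₂
    have hsplit : ∑ i, ‖c i‖ * β (F i ∩ E)
        = ∑ i ∈ s₁, ‖c i‖ * β (F i ∩ E) + ∑ i ∈ s₂, ‖c i‖ * β (F i ∩ E) :=
      (Finset.sum_filter_add_sum_filter_not Finset.univ _ _).symm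
    -- small part
    have hsmall : ∑ i ∈ s₂, ‖c i‖ * β (F i ∩ E) < εc / 2 := by
      have hstep : ∑ i ∈ s₂, ‖c i‖ * β (F i ∩ E) ≤ K * ∑ i ∈ s₂, β (F i ∩ E) := by
        rw [Finset.mul_sum]
        refine Finset.sum_le_sum fun i hi => ?_
        have : ‖c i‖ ≤ K := not_lt.mp (Finset.mem_filter.mp hi).2
        exact mul_le_mul_of_nonneg_right this (hβFiE i)
      have hUmem : (⋃ i ∈ s₂, F i ∩ E) ∈ R :=
        ring_biUnion_mem hne hunion hdiff s₂ _ (fun i _ => hFiE i)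
      have hUsum : β (⋃ i ∈ s₂, F i ∩ E) = ∑ i ∈ s₂, β (F i ∩ E) :=
        addfun_biUnion hne hunion hdiff hβadd s₂ _ (fun i _ => hFiE i)
          (fun i _ j _ hij => hdFiE i j hij)
      have hsub : (⋃ i ∈ s₂, F i ∩ E) ⊆ E := Set.iUnion₂_subset fun i _ => Set.inter_subset_right
      have hmono : β (⋃ i ∈ s₂, F i ∩ E) ≤ β E :=
        addfun_mono hdiff hβ0 hβadd hE hUmem hsub
      have hKE : K * (β E + 1) = εc / 2 := by
        rw [hKdef]; field_simp
      nlinarith [hK, hβE]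
    -- big part
    have hbig : ∑ i ∈ s₁, ‖c i‖ * β (F i ∩ E) ≤ Real.sqrt C * q := by
      have hcs := Finset.sum_mul_sq_le_sq_mul_sq s₁
        (fun i => ‖c i‖ * Real.sqrt (β (F i ∩ E))) (fun i => Real.sqrt (β (F i ∩ E)))
      have hfg : ∀ i, (‖c i‖ * Real.sqrt (β (F i ∩ E))) * Real.sqrt (β (F i ∩ E))
          = ‖c i‖ * β (F i ∩ E) := fun i => by
        rw [mul_assoc, Real.mul_self_sqrt (hβFiE i)]
      rw [Finset.sum_congr rfl fun i _ => hfg i] at hcs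
      have hf2 : ∑ i ∈ s₁, (‖c i‖ * Real.sqrt (β (F i ∩ E))) ^ 2 ≤ C := by
        have hterm : ∀ i ∈ s₁, (‖c i‖ * Real.sqrt (β (F i ∩ E))) ^ 2
            ≤ Complex.normSq (c i) * β (F i) := by
          intro i _
          rw [mul_pow, Real.sq_sqrt (hβFiE i), ← Complex.sq_norm]
          have : β (F i ∩ E) ≤ β (F i) :=
            addfun_mono hdiff hβ0 hβadd (hF i) (hFiE i) Set.inter_subset_left
          have hnn : (0:ℝ) ≤ ‖c i‖ ^ 2 := by positivity
          exact mul_le_mul_of_nonneg_left this hnn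
        calc ∑ i ∈ s₁, (‖c i‖ * Real.sqrt (β (F i ∩ E))) ^ 2
            ≤ ∑ i ∈ s₁, Complex.normSq (c i) * β (F i) := Finset.sum_le_sum hterm
          _ ≤ ∑ i, Complex.normSq (c i) * β (F i) := by
              refine Finset.sum_le_sum_of_subset_of_nonneg (Finset.filter_subset _ _)
                fun i _ _ => ?_
              exact mul_nonneg (Complex.normSq_nonneg _) (hβ0 _ (hF i))
          _ = B n := hBformula.symm
          _ ≤ C := hBn
      have hg2 : ∑ i ∈ s₁, (Real.sqrt (β (F i ∩ E))) ^ 2 < q ^ 2 := by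
        have hgeq : ∑ i ∈ s₁, (Real.sqrt (β (F i ∩ E))) ^ 2 = ∑ i ∈ s₁, β (F i ∩ E) :=
          Finset.sum_congr rfl fun i _ => Real.sq_sqrt (hβFiE i)
        rw [hgeq]
        have hUmem : (⋃ i ∈ s₁, F i ∩ E) ∈ R :=
          ring_biUnion_mem hne hunion hdiff s₁ _ (fun i _ => hFiE i)
        have hUβ : β (⋃ i ∈ s₁, F i ∩ E) = ∑ i ∈ s₁, β (F i ∩ E) :=
          addfun_biUnion hne hunion hdiff hβadd s₁ _ (fun i _ => hFiE i)
            (fun i _ j _ hij => hdFiE i j hij)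
        have hUα : α (⋃ i ∈ s₁, F i ∩ E) = ∑ i ∈ s₁, α (F i ∩ E) :=
          addfun_biUnion hne hunion hdiff hαadd s₁ _ (fun i _ => hFiE i)
            (fun i _ j _ hij => hdFiE i j hij)
        have hKsum : K ^ 2 * ∑ i ∈ s₁, α (F i ∩ E) ≤ A n := by
          rw [Finset.mul_sum, hAformula]
          calc ∑ i ∈ s₁, K ^ 2 * α (F i ∩ E)
              ≤ ∑ i ∈ s₁, Complex.normSq (c i) * α (F i) := by
                refine Finset.sum_le_sum fun i hi => ?_
                have hKc : K < ‖c i‖ := (Finset.mem_filter.mp hi).2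
                have hK2 : K ^ 2 ≤ Complex.normSq (c i) := by
                  have habs : ‖c i‖ ^ 2 = Complex.normSq (c i) := by
                    rw [Complex.sq_norm]
                  rw [← habs]
                  nlinarith [hKc, hK.le]
                have hαmono : α (F i ∩ E) ≤ α (F i) :=
                  addfun_mono hdiff hα0 hαadd (hF i) (hFiE i) Set.inter_subset_left
                have := hα0 _ (hFiE i)
                nlinarith [Complex.normSq_nonneg (c i), hα0 _ (hF i)]
            _ ≤ ∑ i, Complex.normSq (c i) * α (F i) := by
                refine Finset.sum_le_sum_of_subset_of_nonneg (Finset.filter_subset _ _)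
                  fun i _ _ => ?_
                exact mul_nonneg (Complex.normSq_nonneg _) (hα0 _ (hF i))
        have hαU : α (⋃ i ∈ s₁, F i ∩ E) < δ := by
          rw [hUα]
          have hlt : K ^ 2 * ∑ i ∈ s₁, α (F i ∩ E) < δ * K ^ 2 := lt_of_le_of_lt hKsum hAn
          nlinarith [hlt, sq_nonneg K, hK]
        have := hδprop _ hUmem hαU
        rw [hUβ] at this
        exact this
      have hsum_nonneg : 0 ≤ ∑ i ∈ s₁, ‖c i‖ * β (F i ∩ E) :=
        Finset.sum_nonneg fun i _ => mul_nonneg (norm_nonneg _) (hβFiE i)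
      have hsq : (∑ i ∈ s₁, ‖c i‖ * β (F i ∩ E)) ^ 2 ≤ C * q ^ 2 := by
        calc (∑ i ∈ s₁, ‖c i‖ * β (F i ∩ E)) ^ 2
            ≤ (∑ i ∈ s₁, (‖c i‖ * Real.sqrt (β (F i ∩ E))) ^ 2)
              * ∑ i ∈ s₁, (Real.sqrt (β (F i ∩ E))) ^ 2 := hcs
          _ ≤ C * q ^ 2 := by
              have hg2' : 0 ≤ ∑ i ∈ s₁, (Real.sqrt (β (F i ∩ E))) ^ 2 :=
                Finset.sum_nonneg fun i _ => sq_nonneg _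
              nlinarith [hf2, hg2, hg2',
                Finset.sum_nonneg (fun i (_ : i ∈ s₁) =>
                  sq_nonneg (‖c i‖ * Real.sqrt (β (F i ∩ E))))]
      calc ∑ i ∈ s₁, ‖c i‖ * β (F i ∩ E)
          = Real.sqrt ((∑ i ∈ s₁, ‖c i‖ * β (F i ∩ E)) ^ 2) :=
            (Real.sqrt_sq hsum_nonneg).symm
        _ ≤ Real.sqrt (C * q ^ 2) := Real.sqrt_le_sqrt hsq
        _ = Real.sqrt C * q := by
            rw [Real.sqrt_mul hC, Real.sqrt_sq hq.le]
    have hqC : Real.sqrt C * q < εc / 2 := by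
      have h2 : (Real.sqrt C + 1) * q = εc / 2 := by
        rw [hqdef]; field_simp
      nlinarith [hq, Real.sqrt_nonneg C]
    linarith [h1, hsplit ▸ h1]
  -- set up ε chase
  rw [Metric.tendsto_atTop]
  intro ε hε
  set ε' : ℝ := ε / 10 with hε'def
  have hε' : 0 < ε' := by rw [hε'def]; linarith
  -- Cauchy index m
  rw [Metric.tendsto_atTop] at hBC
  obtain ⟨P, hP⟩ := hBC ε' hε'
  set m : ℕ := max P.1 P.2 with hmdef
  have hCau : ∀ k l, m ≤ k → m ≤ l → (b (x k - x l) (x k - x l)).re < ε' := by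
    intro k l hk hl
    have hge : (P.1, P.2) ≤ (k, l) :=
      ⟨le_trans (le_max_left _ _) hk, le_trans (le_max_right _ _) hl⟩
    have := hP (k, l) hge
    rw [Real.dist_eq, sub_zero] at this
    exact lt_of_le_of_lt (le_abs_self _) this
  set C : ℝ := ε' + 2 * Real.sqrt ε' * Real.sqrt (B m) + B m with hCdef
  have hCnonneg : 0 ≤ C := by
    have := hBnonneg m
    have h1 := Real.sqrt_nonneg ε'
    have h2 := Real.sqrt_nonneg (B m)
    nlinarith
  have hBle : ∀ n, m ≤ n → B n ≤ C := by
    intro n hn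
    have hexp := form_expand hbform (x n) (x m)
    have hc := hCau n m hn le_rfl
    have h1 : Real.sqrt ((b (x n - x m) (x n - x m)).re) ≤ Real.sqrt ε' :=
      Real.sqrt_le_sqrt hc.le
    have h2 := Real.sqrt_nonneg (B m)
    have h3 := Real.sqrt_nonneg ((b (x n - x m) (x n - x m)).re)
    rw [hCdef]
    nlinarith [hexp]
  -- the cross term tends to 0
  obtain ⟨nm, cm, Fm, hFm, hdm, hxm⟩ := exists_rep hne hunion hdiff (x m)
  set S : ℝ := ∑ k, ‖cm k‖ with hSdef
  have hS : 0 ≤ S := Finset.sum_nonneg fun k _ => norm_nonneg _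
  set εq : ℝ := ε' / (S + 1) with hεqdef
  have hεq : 0 < εq := div_pos hε' (by linarith)
  have hallk : ∀ᶠ n in atTop, ∀ k : Fin nm, (B n ≤ C →
      ‖b (x n) ⟨(Fm k).indicator (fun _ => (1 : ℂ)),
        indicator_mem_simpleSpan (hFm k)⟩‖ < εq) := by
    rw [eventually_all]
    intro k
    exact claim _ (hFm k) C hCnonneg εq hεq
  have hcross : ∀ᶠ n in atTop, ‖b (x n) (x m)‖ < ε' := by
    filter_upwards [hallk, eventually_ge_atTop m] with n hk hnm
    have hBn := hBle n hnm
    have hdecomp : b (x n) (x m) = ∑ k, (starRingEnd ℂ) (cm k)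
        * b (x n) ⟨(Fm k).indicator (fun _ => (1 : ℂ)),
            indicator_mem_simpleSpan (hFm k)⟩ := by
      rw [hxm, form_sum_right hbform]
      exact Finset.sum_congr rfl fun k _ => form_smul_right hbform _ _ _
    rw [hdecomp]
    have hle : ‖∑ k, (starRingEnd ℂ) (cm k)
        * b (x n) ⟨(Fm k).indicator (fun _ => (1 : ℂ)),
            indicator_mem_simpleSpan (hFm k)⟩‖ ≤ ∑ k, ‖cm k‖ * εq := by
      refine le_trans (norm_sum_le _ _) (Finset.sum_le_sum fun k _ => ?_)
      rw [norm_mul, RCLike.norm_conj]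
      exact mul_le_mul_of_nonneg_left (hk k hBn).le (norm_nonneg _)
    have heq : ∑ k : Fin nm, ‖cm k‖ * εq = S * εq := by
      rw [hSdef, ← Finset.sum_mul]
    have hlt : S * εq < ε' := by
      have h2 : (S + 1) * εq = ε' := by
        rw [hεqdef]; field_simp
      nlinarith [hεq]
    calc ‖∑ k, (starRingEnd ℂ) (cm k)
        * b (x n) ⟨(Fm k).indicator (fun _ => (1 : ℂ)),
            indicator_mem_simpleSpan (hFm k)⟩‖ ≤ ∑ k, ‖cm k‖ * εq := hle
      _ = S * εq := heq
      _ < ε' := hlt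
  -- B m ≤ 4 ε'
  obtain ⟨N₁, hN₁⟩ := eventually_atTop.mp hcross
  set n₀ : ℕ := max N₁ m with hn₀def
  have h1 : ‖b (x n₀) (x m)‖ < ε' := hN₁ n₀ (le_max_left _ _)
  have hdec : b (x m) (x m) = b (x m - x n₀) (x m) + b (x n₀) (x m) := by
    have hsum : x m = (x m - x n₀) + x n₀ := by abel
    calc b (x m) (x m) = b ((x m - x n₀) + x n₀) (x m) := by rw [← hsum]
      _ = b (x m - x n₀) (x m) + b (x n₀) (x m) := hbform.1 _ _ _
  have hBm4 : B m ≤ 4 * ε' := by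
    have hre : B m = (b (x m - x n₀) (x m)).re + (b (x n₀) (x m)).re := by
      rw [hBdef]
      simp only []
      rw [hdec, Complex.add_re]
    have h2 : (b (x m - x n₀) (x m)).re ≤ ‖b (x m - x n₀) (x m)‖ := Complex.re_le_norm _
    have h3 : (b (x n₀) (x m)).re ≤ ‖b (x n₀) (x m)‖ := Complex.re_le_norm _
    have hcs : ‖b (x m - x n₀) (x m)‖
        ≤ Real.sqrt ((b (x m - x n₀) (x m - x n₀)).re) * Real.sqrt (B m) :=
      form_abs_le hbform _ _
    have hcau := hCau m n₀ le_rfl (le_max_right N₁ m)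
    have h4 : Real.sqrt ((b (x m - x n₀) (x m - x n₀)).re) ≤ Real.sqrt ε' :=
      Real.sqrt_le_sqrt hcau.le
    set t : ℝ := Real.sqrt (B m) with htdef
    have ht0 : 0 ≤ t := Real.sqrt_nonneg _
    have ht2 : t ^ 2 = B m := Real.sq_sqrt (hBnonneg m)
    have he0 : 0 ≤ Real.sqrt ε' := Real.sqrt_nonneg _
    have he2 : (Real.sqrt ε') ^ 2 = ε' := Real.sq_sqrt hε'.le
    have hBm : B m ≤ ε' + Real.sqrt ε' * t := by
      have h5 : ‖b (x m - x n₀) (x m)‖ ≤ Real.sqrt ε' * t := by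
        calc ‖b (x m - x n₀) (x m)‖
            ≤ Real.sqrt ((b (x m - x n₀) (x m - x n₀)).re) * Real.sqrt (B m) := hcs
          _ ≤ Real.sqrt ε' * t := by
              rw [← htdef]
              exact mul_le_mul_of_nonneg_right h4 ht0
      linarith [hre, h2, h3, h1, h5]
    nlinarith [sq_nonneg (t - 2 * Real.sqrt ε'), hBm, ht2, he2, ht0, he0]
  have hsqBm : Real.sqrt (B m) ≤ 2 * Real.sqrt ε' := by
    have h4 : Real.sqrt (B m) ≤ Real.sqrt (4 * ε') := Real.sqrt_le_sqrt hBm4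
    have : Real.sqrt (4 * ε') = 2 * Real.sqrt ε' := by
      rw [show (4:ℝ) * ε' = 2 ^ 2 * ε' by norm_num, Real.sqrt_mul (by positivity),
        Real.sqrt_sq (by norm_num : (0:ℝ) ≤ 2)]
    linarith [h4, this ▸ h4]
  refine ⟨m, fun n hn => ?_⟩
  rw [Real.dist_eq, sub_zero, abs_of_nonneg (hBnonneg n)]
  have hBn := hBle n hn
  have he2 : (Real.sqrt ε') ^ 2 = ε' := Real.sq_sqrt hε'.le
  have he0 : 0 ≤ Real.sqrt ε' := Real.sqrt_nonneg _
  have : B n ≤ 9 * ε' := by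
    rw [hCdef] at hBn
    nlinarith [hBn, hBm4, hsqBm, he2, he0]
  rw [hε'def] at this
  linarith
end

section
/- Let α : R → [0,∞) be a bounded finitely additive set function on a ring of sets R and let β : R → ℂ be a bounded finitely additive set function that is absolutely continuous with respect to α. Then there exist, for each n ∈ ℕ, a natural number k_n, complex numbers c_{n,1},…,c_{n,k_n}, and sets E_{n,1},…,E_{n,k_n} ∈ R such that, defining the finitely additive set functions β_n(E) = Σ_{i=1}^{k_n} c_{n,i} α(E ∩ E_{n,i}) for E ∈ R, one has both β(E) = lim_{n→∞} β_n(E) for every E ∈ R and sup_{E∈R} |β − β_n|(E) → 0 as n → ∞, where |β − β_n| denotes the total variation of β − β_n. -/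
open Filter Topology

namespace RNDaux

variable {T : Type*} {R : Set (Set T)}

theorem inter_mem (hdiff : ∀ E ∈ R, ∀ F ∈ R, E \ F ∈ R)
    {E F : Set T} (hE : E ∈ R) (hF : F ∈ R) : E ∩ F ∈ R := by
  have h : E ∩ F = E \ (E \ F) := by ext x; simp only [Set.mem_diff, Set.mem_inter_iff]; tauto
  rw [h]; exact hdiff _ hE _ (hdiff _ hE _ hF)

theorem empty_mem (hne : R.Nonempty) (hdiff : ∀ E ∈ R, ∀ F ∈ R, E \ F ∈ R) :
    (∅ : Set T) ∈ R := by
  obtain ⟨E, hE⟩ := hne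
  have h : (∅ : Set T) = E \ E := by simp
  rw [h]; exact hdiff _ hE _ hE

theorem map_empty {M : Type*} [AddCommGroup M] (h0 : (∅ : Set T) ∈ R)
    (γ : Set T → M)
    (hadd : ∀ E ∈ R, ∀ F ∈ R, Disjoint E F → γ (E ∪ F) = γ E + γ F) :
    γ (∅ : Set T) = 0 := by
  have h := hadd ∅ h0 ∅ h0 disjoint_bot_left
  simp only [Set.union_empty] at h
  have := congrArg (fun x => x - γ (∅ : Set T)) h
  simpa using this.symm

theorem finset_union_mem (hunion : ∀ E ∈ R, ∀ F ∈ R, E ∪ F ∈ R)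
    (hne : R.Nonempty) (hdiff : ∀ E ∈ R, ∀ F ∈ R, E \ F ∈ R)
    {ι : Type*} (s : Finset ι) (G : ι → Set T) (hG : ∀ i ∈ s, G i ∈ R) :
    (⋃ i ∈ s, G i) ∈ R := by
  classical
  induction s using Finset.induction_on with
  | empty => simpa using empty_mem hne hdiff
  | @insert a s ha ih =>
      rw [Finset.set_biUnion_insert]
      exact hunion _ (hG a (Finset.mem_insert_self a s)) _
        (ih fun i hi => hG i (Finset.mem_insert_of_mem hi))

theorem finset_additive {M : Type*} [AddCommGroup M]
    (hunion : ∀ E ∈ R, ∀ F ∈ R, E ∪ F ∈ R)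
    (hne : R.Nonempty) (hdiff : ∀ E ∈ R, ∀ F ∈ R, E \ F ∈ R)
    (γ : Set T → M)
    (hadd : ∀ E ∈ R, ∀ F ∈ R, Disjoint E F → γ (E ∪ F) = γ E + γ F)
    {ι : Type*} (s : Finset ι) (G : ι → Set T) (hG : ∀ i ∈ s, G i ∈ R)
    (hdisj : (s : Set ι).PairwiseDisjoint G) :
    γ (⋃ i ∈ s, G i) = ∑ i ∈ s, γ (G i) := by
  classical
  induction s using Finset.induction_on with
  | empty => simpa using map_empty (empty_mem hne hdiff) γ hadd
  | @insert a s ha ih =>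
      rw [Finset.set_biUnion_insert, Finset.sum_insert ha]
      have h1 : G a ∈ R := hG a (Finset.mem_insert_self a s)
      have h2 : (⋃ i ∈ s, G i) ∈ R :=
        finset_union_mem hunion hne hdiff s G
          (fun i hi => hG i (Finset.mem_insert_of_mem hi))
      have hd : Disjoint (G a) (⋃ i ∈ s, G i) := by
        rw [Set.disjoint_iUnion₂_right]
        intro i hi
        exact hdisj (Finset.mem_insert_self a s) (Finset.mem_insert_of_mem hi)
          (fun h => ha (h ▸ hi))
      rw [hadd _ h1 _ h2 hd,
        ih (fun i hi => hG i (Finset.mem_insert_of_mem hi))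
          (hdisj.subset (by intro x hx; simp only [Finset.coe_insert, Set.mem_insert_iff]; right; exact hx))]

variable {T : Type*} {R : Set (Set T)}

theorem inter_mem' (hdiff : ∀ E ∈ R, ∀ F ∈ R, E \ F ∈ R)
    {E F : Set T} (hE : E ∈ R) (hF : F ∈ R) : E ∩ F ∈ R := by
  have h : E ∩ F = E \ (E \ F) := by
    ext x; simp only [Set.mem_diff, Set.mem_inter_iff]; tauto
  rw [h]; exact hdiff _ hE _ (hdiff _ hE _ hF)

theorem approx_hahn
    (hunion : ∀ E ∈ R, ∀ F ∈ R, E ∪ F ∈ R)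
    (hdiff : ∀ E ∈ R, ∀ F ∈ R, E \ F ∈ R)
    (hne : R.Nonempty)
    (γ : Set T → ℝ)
    (hadd : ∀ E ∈ R, ∀ F ∈ R, Disjoint E F → γ (E ∪ F) = γ E + γ F)
    {M : ℝ} (hbdd : ∀ E ∈ R, γ E ≤ M)
    {η : ℝ} (hη : 0 < η) :
    ∃ A ∈ R, (∀ E ∈ R, -η ≤ γ (E ∩ A)) ∧ (∀ E ∈ R, γ (E \ A) ≤ η) := by
  set s := sSup (γ '' R) with hs
  have hne' : (γ '' R).Nonempty := hne.image γ
  have hbddA : BddAbove (γ '' R) := ⟨M, by rintro x ⟨E, hE, rfl⟩; exact hbdd E hE⟩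
  obtain ⟨x, hx, hxgt⟩ := exists_lt_of_lt_csSup hne' (show s - η < s by linarith)
  obtain ⟨A, hA, rfl⟩ := hx
  refine ⟨A, hA, ?_, ?_⟩
  · intro E hE
    have h1 : A = (E ∩ A) ∪ (A \ E) := by
      ext y; simp only [Set.mem_union, Set.mem_inter_iff, Set.mem_diff]; tauto
    have h2 : Disjoint (E ∩ A) (A \ E) := by
      rw [Set.disjoint_iff_inter_eq_empty]; ext y
      simp only [Set.mem_inter_iff, Set.mem_diff, Set.mem_empty_iff_false]; tauto
    have h3 : γ A = γ (E ∩ A) + γ (A \ E) := by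
      rw [← hadd _ (inter_mem' hdiff hE hA) _ (hdiff _ hA _ hE) h2, ← h1]
    have h4 : γ (A \ E) ≤ s := le_csSup hbddA ⟨A \ E, hdiff _ hA _ hE, rfl⟩
    linarith
  · intro E hE
    have h1 : A ∪ E = A ∪ (E \ A) := by
      ext y; simp only [Set.mem_union, Set.mem_diff]; tauto
    have h2 : Disjoint A (E \ A) := by
      rw [Set.disjoint_iff_inter_eq_empty]; ext y
      simp only [Set.mem_inter_iff, Set.mem_diff, Set.mem_empty_iff_false]; tauto
    have h3 : γ (A ∪ E) = γ A + γ (E \ A) := by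
      rw [h1]; exact hadd _ hA _ (hdiff _ hE _ hA) h2
    have h4 : γ (A ∪ E) ≤ s := le_csSup hbddA ⟨A ∪ E, hunion _ hA _ hE, rfl⟩
    linarith


theorem chain
    (hunion : ∀ E ∈ R, ∀ F ∈ R, E ∪ F ∈ R)
    (hdiff : ∀ E ∈ R, ∀ F ∈ R, E \ F ∈ R)
    (hne : R.Nonempty)
    (α : Set T → ℝ) (γ : Set T → ℝ)
    (hα0 : ∀ E ∈ R, 0 ≤ α E)
    (hαadd : ∀ E ∈ R, ∀ F ∈ R, Disjoint E F → α (E ∪ F) = α E + α F)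
    (hadd : ∀ E ∈ R, ∀ F ∈ R, Disjoint E F → γ (E ∪ F) = γ E + γ F)
    {Mα Mγ : ℝ} (hMα : ∀ E ∈ R, α E ≤ Mα) (hMγ : ∀ E ∈ R, |γ E| ≤ Mγ)
    (t : ℕ → ℝ) (hmono : Monotone t)
    {η : ℝ} (hη : 0 < η) :
    ∃ A : ℕ → Set T, (∀ j, A j ∈ R) ∧ (∀ j, A (j + 1) ⊆ A j) ∧
      (∀ j, ∀ E ∈ R, -η ≤ γ (E ∩ A j) - t j * α (E ∩ A j)) ∧
      (∀ j, ∀ E ∈ R, γ (E \ A j) - t j * α (E \ A j) ≤ (j + 1) * η) := by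
  have hγtadd : ∀ u : ℝ, ∀ E ∈ R, ∀ F ∈ R, Disjoint E F →
      γ (E ∪ F) - u * α (E ∪ F) = (γ E - u * α E) + (γ F - u * α F) := by
    intro u E hE F hF hd
    rw [hadd _ hE _ hF hd, hαadd _ hE _ hF hd]; ring
  have hB : ∀ j : ℕ, ∃ A ∈ R,
      (∀ E ∈ R, -η ≤ γ (E ∩ A) - t j * α (E ∩ A)) ∧
      (∀ E ∈ R, γ (E \ A) - t j * α (E \ A) ≤ η) := by
    intro j
    refine approx_hahn hunion hdiff hne (fun E => γ E - t j * α E)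
      (fun E hE F hF hd => hγtadd (t j) E hE F hF hd)
      (M := Mγ + |t j| * Mα) ?_ hη
    intro E hE
    have h1 : γ E ≤ Mγ := (abs_le.mp (hMγ E hE)).2
    have h2 : -(t j * α E) ≤ |t j| * α E := by
      rw [← neg_mul]
      exact mul_le_mul_of_nonneg_right (neg_le_abs _) (hα0 E hE)
    have h3 : |t j| * α E ≤ |t j| * Mα :=
      mul_le_mul_of_nonneg_left (hMα E hE) (abs_nonneg _)
    linarith
  choose B hBR hBpos hBneg using hB
  set A : ℕ → Set T := fun j => Nat.rec (B 0) (fun j Aj => Aj ∩ B (j + 1)) j with hA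
  have hAsucc : ∀ j, A (j + 1) = A j ∩ B (j + 1) := fun j => rfl
  have hAR : ∀ j, A j ∈ R := by
    intro j; induction j with
    | zero => exact hBR 0
    | succ j ih => rw [hAsucc]; exact inter_mem' hdiff ih (hBR (j + 1))
  refine ⟨A, hAR, fun j => by rw [hAsucc]; exact Set.inter_subset_left, ?_, ?_⟩
  · intro j E hE
    cases j with
    | zero => exact hBpos 0 E hE
    | succ j =>
        have h := hBpos (j + 1) (E ∩ A j) (inter_mem' hdiff hE (hAR j))
        rw [hAsucc, ← Set.inter_assoc]
        exact h
  · intro j E hE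
    induction j with
    | zero => have h0 : A 0 = B 0 := rfl; rw [h0]; simpa using hBneg 0 E hE
    | succ j ih =>
        have hsplit : E \ A (j + 1) = (E \ A j) ∪ ((E ∩ A j) \ B (j + 1)) := by
          rw [hAsucc]
          ext y
          simp only [Set.mem_diff, Set.mem_union, Set.mem_inter_iff]
          tauto
        have hdisj : Disjoint (E \ A j) ((E ∩ A j) \ B (j + 1)) := by
          rw [Set.disjoint_iff_inter_eq_empty]; ext y
          simp only [Set.mem_inter_iff, Set.mem_diff, Set.mem_empty_iff_false]
          tauto
        have hm1 : E \ A j ∈ R := hdiff _ hE _ (hAR j)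
        have hm2 : (E ∩ A j) \ B (j + 1) ∈ R :=
          hdiff _ (inter_mem' hdiff hE (hAR j)) _ (hBR (j + 1))
        have heq : γ (E \ A (j + 1)) - t (j + 1) * α (E \ A (j + 1)) =
            (γ (E \ A j) - t (j + 1) * α (E \ A j)) +
            (γ ((E ∩ A j) \ B (j + 1)) - t (j + 1) * α ((E ∩ A j) \ B (j + 1))) := by
          rw [hsplit]; exact hγtadd (t (j + 1)) _ hm1 _ hm2 hdisj
        have h1 : γ (E \ A j) - t (j + 1) * α (E \ A j) ≤
            γ (E \ A j) - t j * α (E \ A j) := by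
          have := mul_le_mul_of_nonneg_right (hmono (Nat.le_succ j)) (hα0 _ hm1)
          linarith
        have h2 : γ ((E ∩ A j) \ B (j + 1)) - t (j + 1) * α ((E ∩ A j) \ B (j + 1)) ≤ η :=
          hBneg (j + 1) _ (inter_mem' hdiff hE (hAR j))
        have h3 := ih
        push_cast
        push_cast at h3
        linarith


theorem boundary_sum
    (hunion : ∀ E ∈ R, ∀ F ∈ R, E ∪ F ∈ R)
    (hdiff : ∀ E ∈ R, ∀ F ∈ R, E \ F ∈ R)
    (hne : R.Nonempty)
    (γ : Set T → ℝ)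
    (hadd : ∀ E ∈ R, ∀ F ∈ R, Disjoint E F → γ (E ∪ F) = γ E + γ F)
    {m : ℕ} (W : Fin m → Set T) (hW : ∀ i, W i ∈ R)
    (hdisj : Pairwise (Function.onFun Disjoint W))
    {ε₁ : ℝ} (hsmall : ∀ P : Finset (Fin m), |γ (⋃ i ∈ P, W i)| ≤ ε₁) :
    ∑ i, |γ (W i)| ≤ 2 * ε₁ := by
  classical
  set P := Finset.univ.filter (fun i => 0 ≤ γ (W i)) with hP
  have hsum : ∀ Q : Finset (Fin m), γ (⋃ i ∈ Q, W i) = ∑ i ∈ Q, γ (W i) :=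
    fun Q => finset_additive hunion hne hdiff γ hadd Q W (fun i _ => hW i)
      ((hdisj.set_pairwise _))
  have h1 : ∑ i ∈ P, |γ (W i)| ≤ ε₁ := by
    have : ∑ i ∈ P, |γ (W i)| = ∑ i ∈ P, γ (W i) := by
      apply Finset.sum_congr rfl
      intro i hi
      exact abs_of_nonneg (Finset.mem_filter.mp hi).2
    rw [this, ← hsum P]
    exact (le_abs_self _).trans (hsmall P)
  have h2 : ∑ i ∈ Pᶜ, |γ (W i)| ≤ ε₁ := by
    have : ∑ i ∈ Pᶜ, |γ (W i)| = -∑ i ∈ Pᶜ, γ (W i) := by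
      rw [← Finset.sum_neg_distrib]
      apply Finset.sum_congr rfl
      intro i hi
      have : ¬ (0 ≤ γ (W i)) := by
        simpa [hP] using (Finset.mem_compl.mp hi)
      exact abs_of_neg (lt_of_not_ge this)
    rw [this, ← hsum Pᶜ]
    exact (neg_le_abs _).trans (hsmall Pᶜ)
  calc ∑ i, |γ (W i)| = ∑ i ∈ P, |γ (W i)| + ∑ i ∈ Pᶜ, |γ (W i)| :=
        (Finset.sum_add_sum_compl P _).symm
    _ ≤ 2 * ε₁ := by linarith

theorem mid_sum
    (hunion : ∀ E ∈ R, ∀ F ∈ R, E ∪ F ∈ R)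
    (hdiff : ∀ E ∈ R, ∀ F ∈ R, E \ F ∈ R)
    (hne : R.Nonempty)
    (α γ : Set T → ℝ)
    (hα0 : ∀ E ∈ R, 0 ≤ α E)
    (hαadd : ∀ E ∈ R, ∀ F ∈ R, Disjoint E F → α (E ∪ F) = α E + α F)
    (hadd : ∀ E ∈ R, ∀ F ∈ R, Disjoint E F → γ (E ∪ F) = γ E + γ F)
    (A : ℕ → Set T) (hAR : ∀ j, A j ∈ R)
    (t : ℕ → ℝ) {η : ℝ} (hη : 0 < η)
    (hpos : ∀ j, ∀ E ∈ R, -η ≤ γ (E ∩ A j) - t j * α (E ∩ A j))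
    (hneg : ∀ j, ∀ E ∈ R, γ (E \ A j) - t j * α (E \ A j) ≤ (j + 1) * η)
    {h : ℝ} (hh : 0 < h) (j : ℕ) (hth : t (j + 1) = t j + h)
    {m : ℕ} (V : Fin m → Set T) (hV : ∀ i, V i ∈ R)
    (hdisj : Pairwise (Function.onFun Disjoint V))
    (hsub : ∀ i, V i ⊆ A j \ A (j + 1)) :
    ∑ i, |γ (V i) - t j * α (V i)| ≤
      h * α (⋃ i ∈ (Finset.univ : Finset (Fin m)), V i) + ((j : ℝ) + 3) * η := by
  classical
  set Q := Finset.univ.filter (fun i => 0 < γ (V i) - t (j + 1) * α (V i)) with hQ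
  set Q' := Finset.univ.filter (fun i => γ (V i) - t j * α (V i) < 0) with hQ'
  have hγtadd : ∀ u : ℝ, ∀ E ∈ R, ∀ F ∈ R, Disjoint E F →
      γ (E ∪ F) - u * α (E ∪ F) = (γ E - u * α E) + (γ F - u * α F) := by
    intro u E hE F hF hd
    rw [hadd _ hE _ hF hd, hαadd _ hE _ hF hd]; ring
  have hsumu : ∀ u : ℝ, ∀ S : Finset (Fin m),
      γ (⋃ i ∈ S, V i) - u * α (⋃ i ∈ S, V i) = ∑ i ∈ S, (γ (V i) - u * α (V i)) :=
    fun u S => finset_additive hunion hne hdiff (fun E => γ E - u * α E)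
      (fun E hE F hF hd => hγtadd u E hE F hF hd) S V (fun i _ => hV i)
      (hdisj.set_pairwise _)
  -- sum of positive parts at level j+1
  have hQbound : ∑ i ∈ Q, (γ (V i) - t (j + 1) * α (V i)) ≤ ((j : ℝ) + 2) * η := by
    set U := ⋃ i ∈ Q, V i with hU
    have hUR : U ∈ R := finset_union_mem hunion hne hdiff Q V (fun i _ => hV i)
    have hUdiff : U \ A (j + 1) = U := by
      ext x
      simp only [Set.mem_diff, hU, Set.mem_iUnion]
      constructor
      · rintro ⟨hx, -⟩; exact hx
      · rintro ⟨i, hi, hxi⟩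
        exact ⟨⟨i, hi, hxi⟩, fun hx2 => (hsub i hxi).2 hx2⟩
    have := hneg (j + 1) U hUR
    rw [hUdiff, hsumu (t (j + 1)) Q] at this
    push_cast at this
    linarith
  -- sum of negative parts at level j
  have hQ'bound : ∑ i ∈ Q', -(γ (V i) - t j * α (V i)) ≤ η := by
    set U := ⋃ i ∈ Q', V i with hU
    have hUR : U ∈ R := finset_union_mem hunion hne hdiff Q' V (fun i _ => hV i)
    have hUinter : U ∩ A j = U := by
      ext x
      simp only [Set.mem_inter_iff, hU, Set.mem_iUnion]
      constructor
      · rintro ⟨hx, -⟩; exact hx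
      · rintro ⟨i, hi, hxi⟩
        exact ⟨⟨i, hi, hxi⟩, (hsub i hxi).1⟩
    have := hpos j U hUR
    rw [hUinter, hsumu (t j) Q'] at this
    rw [Finset.sum_neg_distrib]
    linarith
  have hmemQ : ∀ i, i ∈ Q ↔ 0 < γ (V i) - t (j + 1) * α (V i) := by
    intro i; rw [hQ, Finset.mem_filter]; simp only [Finset.mem_univ, true_and]
  have hmemQ' : ∀ i, i ∈ Q' ↔ γ (V i) - t j * α (V i) < 0 := by
    intro i; rw [hQ', Finset.mem_filter]; simp only [Finset.mem_univ, true_and]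
  have hkey : ∀ i, |γ (V i) - t j * α (V i)| ≤ h * α (V i) +
      (if i ∈ Q then γ (V i) - t (j + 1) * α (V i) else 0) +
      (if i ∈ Q' then -(γ (V i) - t j * α (V i)) else 0) := by
    intro i
    have hα : 0 ≤ α (V i) := hα0 _ (hV i)
    have hmul : 0 ≤ h * α (V i) := mul_nonneg hh.le hα
    have hrel : γ (V i) - t j * α (V i) =
        (γ (V i) - t (j + 1) * α (V i)) + h * α (V i) := by rw [hth]; ring
    rcases le_or_gt 0 (γ (V i) - t j * α (V i)) with h1 | h1
    · rw [abs_of_nonneg h1]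
      have hnotQ' : i ∉ Q' := fun hc => absurd ((hmemQ' i).mp hc) (not_lt.mpr h1)
      rw [if_neg hnotQ']
      by_cases hc : i ∈ Q
      · rw [if_pos hc]; linarith
      · have hb : γ (V i) - t (j + 1) * α (V i) ≤ 0 :=
          not_lt.mp (fun hlt => hc ((hmemQ i).mpr hlt))
        rw [if_neg hc]; linarith
    · rw [abs_of_neg h1]
      rw [if_pos ((hmemQ' i).mpr h1)]
      by_cases hc : i ∈ Q
      · have hb := (hmemQ i).mp hc
        rw [if_pos hc]; linarith
      · rw [if_neg hc]; linarith
  calc ∑ i, |γ (V i) - t j * α (V i)|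
      ≤ ∑ i, (h * α (V i) +
        (if i ∈ Q then γ (V i) - t (j + 1) * α (V i) else 0) +
        (if i ∈ Q' then -(γ (V i) - t j * α (V i)) else 0)) :=
        Finset.sum_le_sum (fun i _ => hkey i)
    _ = h * (∑ i, α (V i)) + ∑ i ∈ Q, (γ (V i) - t (j + 1) * α (V i)) +
        ∑ i ∈ Q', -(γ (V i) - t j * α (V i)) := by
        rw [Finset.sum_add_distrib, Finset.sum_add_distrib, Finset.mul_sum]
        congr 1
        · congr 1
          rw [Finset.sum_ite_mem, Finset.univ_inter]
        · rw [Finset.sum_ite_mem, Finset.univ_inter]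
    _ ≤ h * α (⋃ i ∈ (Finset.univ : Finset (Fin m)), V i) + ((j : ℝ) + 3) * η := by
        have hα : α (⋃ i ∈ (Finset.univ : Finset (Fin m)), V i) = ∑ i, α (V i) :=
          finset_additive hunion hne hdiff α hαadd _ V (fun i _ => hV i)
            (hdisj.set_pairwise _)
        rw [hα]
        push_cast
        linarith


theorem telescope (A : ℕ → Set T) (hanti : Antitone A) :
    ∀ n, A 0 \ A n = ⋃ j ∈ Finset.range n, (A j \ A (j + 1)) := by
  intro n
  induction n with
  | zero => simp
  | succ n ih =>
      rw [Finset.range_add_one, Finset.set_biUnion_insert, ← ih]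
      have h1 : A n ⊆ A 0 := hanti (Nat.zero_le n)
      have h2 : A (n + 1) ⊆ A n := hanti (Nat.le_succ n)
      ext x
      simp only [Set.mem_diff, Set.mem_union]
      constructor
      · rintro ⟨hx0, hxn1⟩
        by_cases hxn : x ∈ A n
        · exact Or.inl ⟨hxn, hxn1⟩
        · exact Or.inr ⟨hx0, hxn⟩
      · rintro (⟨hxn, hxn1⟩ | ⟨hx0, hxn⟩)
        · exact ⟨h1 hxn, hxn1⟩
        · exact ⟨hx0, fun hc => hxn (h2 hc)⟩

set_option maxHeartbeats 2000000 in
theorem core_real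
    (hunion : ∀ E ∈ R, ∀ F ∈ R, E ∪ F ∈ R)
    (hdiff : ∀ E ∈ R, ∀ F ∈ R, E \ F ∈ R)
    (hne : R.Nonempty)
    (α : Set T → ℝ)
    (hα0 : ∀ E ∈ R, 0 ≤ α E)
    (hαadd : ∀ E ∈ R, ∀ F ∈ R, Disjoint E F → α (E ∪ F) = α E + α F)
    {Mα : ℝ} (hMα : ∀ E ∈ R, α E ≤ Mα)
    (γ : Set T → ℝ)
    (hadd : ∀ E ∈ R, ∀ F ∈ R, Disjoint E F → γ (E ∪ F) = γ E + γ F)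
    {Mγ : ℝ} (hMγ : ∀ E ∈ R, |γ E| ≤ Mγ)
    (hac : ∀ ε : ℝ, 0 < ε → ∃ δ : ℝ, 0 < δ ∧ ∀ E ∈ R, α E < δ → |γ E| < ε)
    {ε : ℝ} (hε : 0 < ε) :
    ∃ (k : ℕ) (c : Fin k → ℝ) (Es : Fin k → Set T),
      (∀ i, Es i ∈ R) ∧
      ∀ (m : ℕ) (F : Fin m → Set T), (∀ i, F i ∈ R) →
        Pairwise (Function.onFun Disjoint F) →
        ∑ i, |γ (F i) - ∑ j, c j * α (F i ∩ Es j)| ≤ ε := by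
  classical
  have h0R : (∅ : Set T) ∈ R := empty_mem hne hdiff
  have hMγ0 : 0 ≤ Mγ := le_trans (abs_nonneg _) (hMγ ∅ h0R)
  have hαempty : α (∅ : Set T) = 0 := map_empty h0R α hαadd
  have hMα0 : 0 ≤ Mα := hαempty ▸ hMα ∅ h0R
  obtain ⟨δ, hδ, hδprop⟩ := hac (ε / 8) (by linarith)
  set h : ℝ := ε / (4 * (Mα + 1)) with hh_def
  have hh : 0 < h := by positivity
  set B : ℝ := (Mγ + 2) / δ with hB_def
  have hB : 0 < B := by positivity
  have hδB : δ * B = Mγ + 2 := by rw [hB_def]; field_simp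
  set N : ℕ := ⌈(2 * B) / h⌉₊ with hN_def
  have hN : 2 * B / h ≤ (N : ℝ) := Nat.le_ceil _
  have hNh : 2 * B ≤ (N : ℝ) * h := by
    rw [div_le_iff₀ hh] at hN; linarith
  set t : ℕ → ℝ := fun j => -B + j * h with ht_def
  have htmono : Monotone t := by
    intro a b hab
    simp only [ht_def]
    have : (a : ℝ) ≤ b := Nat.cast_le.mpr hab
    nlinarith
  have htN : B ≤ t N := by simp only [ht_def]; linarith
  have ht0 : t 0 = -B := by simp [ht_def]
  have htstep : ∀ j : ℕ, t (j + 1) = t j + h := by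
    intro j; simp only [ht_def]; push_cast; ring
  set η : ℝ := min 1 (ε / (4 * (N + 1) * (N + 3))) with hη_def
  have hη : 0 < η := lt_min one_pos (by positivity)
  have hη1 : η ≤ 1 := min_le_left _ _
  have hηε : η ≤ ε / (4 * (N + 1) * (N + 3)) := min_le_right _ _
  clear_value η t N B h
  obtain ⟨A, hAR, hAstep, hpos, hneg⟩ :=
    chain hunion hdiff hne α γ hα0 hαadd hadd hMα hMγ t htmono hη
  have hAanti : Antitone A := antitone_nat_of_succ_le hAstep
  set D : ℕ → Set T := fun j => A j \ A (j + 1) with hD_def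
  have hDR : ∀ j, D j ∈ R := fun j => hdiff _ (hAR j) _ (hAR (j + 1))
  have hDdisj : ∀ j k, j < k → Disjoint (D j) (D k) := by
    intro j k hjk
    have h1 : D k ⊆ A (j + 1) := fun x hx => hAanti hjk hx.1
    exact Set.disjoint_left.mpr fun x hxj hxk => hxj.2 (h1 hxk)
  refine ⟨N, fun j => t j, fun j => D j, fun j => hDR j, ?_⟩
  intro m F hF hFdisj
  -- pointwise decomposition
  have hdecomp : ∀ i, γ (F i) - ∑ j : Fin N, t j * α (F i ∩ D j) =
      γ (F i \ A 0) + γ (F i ∩ A N) +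
      ∑ j ∈ Finset.range N, (γ (F i ∩ D j) - t j * α (F i ∩ D j)) := by
    intro i
    have hFA0 : F i ∩ A 0 ∈ R := inter_mem' hdiff (hF i) (hAR 0)
    have e1 : γ (F i) = γ (F i \ A 0) + γ (F i ∩ A 0) := by
      rw [← hadd _ (hdiff _ (hF i) _ (hAR 0)) _ hFA0 ?_]
      · congr 1
        ext x; simp only [Set.mem_union, Set.mem_diff, Set.mem_inter_iff]; tauto
      · rw [Set.disjoint_iff_inter_eq_empty]; ext x
        simp only [Set.mem_inter_iff, Set.mem_diff, Set.mem_empty_iff_false]; tauto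
    have e2 : γ (F i ∩ A 0) = γ (F i ∩ (A 0 \ A N)) + γ (F i ∩ A N) := by
      rw [← hadd _ (inter_mem' hdiff (hF i) (hdiff _ (hAR 0) _ (hAR N))) _
        (inter_mem' hdiff (hF i) (hAR N)) ?_]
      · congr 1
        have hsub : A N ⊆ A 0 := hAanti (Nat.zero_le N)
        ext x
        simp only [Set.mem_union, Set.mem_inter_iff, Set.mem_diff]
        constructor
        · rintro ⟨hx, hx0⟩
          by_cases hxN : x ∈ A N
          · exact Or.inr ⟨hx, hxN⟩
          · exact Or.inl ⟨hx, hx0, hxN⟩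
        · rintro (⟨hx, hx0, -⟩ | ⟨hx, hxN⟩)
          · exact ⟨hx, hx0⟩
          · exact ⟨hx, hsub hxN⟩
      · rw [Set.disjoint_iff_inter_eq_empty]; ext x
        simp only [Set.mem_inter_iff, Set.mem_diff, Set.mem_empty_iff_false]; tauto
    have e3 : F i ∩ (A 0 \ A N) = ⋃ j ∈ Finset.range N, (F i ∩ D j) := by
      rw [telescope A hAanti N, Set.inter_iUnion₂]
    have e4 : γ (F i ∩ (A 0 \ A N)) = ∑ j ∈ Finset.range N, γ (F i ∩ D j) := by
      rw [e3]
      refine finset_additive hunion hne hdiff γ hadd _ _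
        (fun j _ => inter_mem' hdiff (hF i) (hDR j)) ?_
      intro a _ b _ hab
      rcases lt_or_gt_of_ne hab with hlt | hlt
      · exact ((hDdisj a b hlt).mono Set.inter_subset_right Set.inter_subset_right)
      · exact ((hDdisj b a hlt).mono Set.inter_subset_right Set.inter_subset_right).symm
    have e5 : ∑ j : Fin N, t j * α (F i ∩ D j) =
        ∑ j ∈ Finset.range N, t j * α (F i ∩ D j) :=
      Fin.sum_univ_eq_sum_range (fun j => t j * α (F i ∩ D j)) N
    rw [e5, e1, e2, e4, Finset.sum_sub_distrib]
    ring
  have habs : ∀ i, |γ (F i) - ∑ j : Fin N, t j * α (F i ∩ D j)| ≤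
      |γ (F i \ A 0)| + |γ (F i ∩ A N)| +
      ∑ j ∈ Finset.range N, |γ (F i ∩ D j) - t j * α (F i ∩ D j)| := by
    intro i
    rw [hdecomp i]
    calc |γ (F i \ A 0) + γ (F i ∩ A N) +
        ∑ j ∈ Finset.range N, (γ (F i ∩ D j) - t j * α (F i ∩ D j))|
        ≤ |γ (F i \ A 0) + γ (F i ∩ A N)| +
          |∑ j ∈ Finset.range N, (γ (F i ∩ D j) - t j * α (F i ∩ D j))| := abs_add_le _ _
      _ ≤ |γ (F i \ A 0)| + |γ (F i ∩ A N)| +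
          ∑ j ∈ Finset.range N, |γ (F i ∩ D j) - t j * α (F i ∩ D j)| := by
          gcongr
          · exact abs_add_le _ _
          · exact Finset.abs_sum_le_sum_abs _ _
  -- bottom boundary
  have hbot : ∑ i, |γ (F i \ A 0)| ≤ 2 * (ε / 8) := by
    apply boundary_sum hunion hdiff hne γ hadd (fun i => F i \ A 0)
      (fun i => hdiff _ (hF i) _ (hAR 0))
      (hFdisj.mono fun i k hik => hik.mono Set.diff_subset Set.diff_subset)
    intro P
    set U := ⋃ i ∈ P, (F i \ A 0) with hU
    have hUR : U ∈ R := finset_union_mem hunion hne hdiff P _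
      (fun i _ => hdiff _ (hF i) _ (hAR 0))
    have hUdiff : U \ A 0 = U := by
      ext x
      simp only [Set.mem_diff, hU, Set.mem_iUnion]
      constructor
      · rintro ⟨hx, -⟩; exact hx
      · rintro ⟨i, hi, hxi⟩; exact ⟨⟨i, hi, hxi⟩, hxi.2⟩
    have h1 := hneg 0 U hUR
    rw [hUdiff, ht0] at h1
    push_cast at h1
    have h2 : -Mγ ≤ γ U := (abs_le.mp (hMγ U hUR)).1
    have h3 : 0 ≤ α U := hα0 U hUR
    have hBα : B * α U ≤ 1 + Mγ := by nlinarith [hη1]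
    have h5 := mul_le_mul_of_nonneg_left hBα hδ.le
    have hαU : α U < δ := by nlinarith [hδ, hδB, hMγ0]
    exact (hδprop U hUR hαU).le
  -- top boundary
  have htop : ∑ i, |γ (F i ∩ A N)| ≤ 2 * (ε / 8) := by
    apply boundary_sum hunion hdiff hne γ hadd (fun i => F i ∩ A N)
      (fun i => inter_mem' hdiff (hF i) (hAR N))
      (hFdisj.mono fun i k hik => hik.mono Set.inter_subset_left Set.inter_subset_left)
    intro P
    set U := ⋃ i ∈ P, (F i ∩ A N) with hU
    have hUR : U ∈ R := finset_union_mem hunion hne hdiff P _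
      (fun i _ => inter_mem' hdiff (hF i) (hAR N))
    have hUinter : U ∩ A N = U := by
      ext x
      simp only [Set.mem_inter_iff, hU, Set.mem_iUnion]
      constructor
      · rintro ⟨hx, -⟩; exact hx
      · rintro ⟨i, hi, hxi⟩; exact ⟨⟨i, hi, hxi⟩, hxi.2⟩
    have h1 := hpos N U hUR
    rw [hUinter] at h1
    have h2 : γ U ≤ Mγ := (abs_le.mp (hMγ U hUR)).2
    have h3 : 0 ≤ α U := hα0 U hUR
    have h4 : t N * α U ≤ Mγ + 1 := by nlinarith [hη1]
    have hBα : B * α U ≤ Mγ + 1 :=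
      le_trans (mul_le_mul_of_nonneg_right htN h3) h4
    have h5 := mul_le_mul_of_nonneg_left hBα hδ.le
    have hαU : α U < δ := by nlinarith [hδ, hδB, hMγ0]
    exact (hδprop U hUR hαU).le
  -- middle terms
  set U : ℕ → Set T := fun j => ⋃ i ∈ (Finset.univ : Finset (Fin m)), (F i ∩ D j)
    with hU_def
  have hmid : ∀ j ∈ Finset.range N,
      ∑ i, |γ (F i ∩ D j) - t j * α (F i ∩ D j)| ≤
        h * α (U j) + ((j : ℝ) + 3) * η := by
    intro j _
    exact mid_sum hunion hdiff hne α γ hα0 hαadd hadd A hAR t hη hpos hneg hh j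
      (htstep j)
      (fun i => F i ∩ D j) (fun i => inter_mem' hdiff (hF i) (hDR j))
      (hFdisj.mono fun i k hik =>
        hik.mono Set.inter_subset_left Set.inter_subset_left)
      (fun i => Set.inter_subset_right)
  have hURj : ∀ j, U j ∈ R := fun j =>
    finset_union_mem hunion hne hdiff _ _
      (fun i _ => inter_mem' hdiff (hF i) (hDR j))
  have hUsub : ∀ j, U j ⊆ D j := by
    intro j x hx
    simp only [hU_def, Set.mem_iUnion] at hx
    obtain ⟨i, _, hxi⟩ := hx
    exact hxi.2
  have hUdisj : (↑(Finset.range N) : Set ℕ).PairwiseDisjoint U := by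
    intro a _ b _ hab
    rcases lt_or_gt_of_ne hab with hlt | hlt
    · exact (hDdisj a b hlt).mono (hUsub a) (hUsub b)
    · exact ((hDdisj b a hlt).mono (hUsub b) (hUsub a)).symm
  have hαU : ∑ j ∈ Finset.range N, α (U j) ≤ Mα := by
    rw [← finset_additive hunion hne hdiff α hαadd _ U (fun j _ => hURj j) hUdisj]
    exact hMα _ (finset_union_mem hunion hne hdiff _ U (fun j _ => hURj j))
  have hαUnn : ∀ j ∈ Finset.range N, 0 ≤ α (U j) := fun j _ => hα0 _ (hURj j)
  -- combine
  have hsum1 : ∑ j ∈ Finset.range N, h * α (U j) ≤ ε / 4 := by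
    rw [← Finset.mul_sum]
    have h4 : h * Mα ≤ ε / 4 := by
      rw [hh_def, div_mul_eq_mul_div, div_le_div_iff₀ (by positivity) (by norm_num)]
      nlinarith
    have := mul_le_mul_of_nonneg_left hαU hh.le
    linarith
  have hsum2 : ∑ j ∈ Finset.range N, ((j : ℝ) + 3) * η ≤ ε / 4 := by
    have hstep2 : ∀ j ∈ Finset.range N, ((j : ℝ) + 3) * η ≤ ((N : ℝ) + 2) * η := by
      intro j hj
      have : (j : ℝ) + 1 ≤ N := by
        have := Finset.mem_range.mp hj
        exact_mod_cast Nat.succ_le_of_lt this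
      nlinarith [hη.le]
    calc ∑ j ∈ Finset.range N, ((j : ℝ) + 3) * η
        ≤ ∑ _j ∈ Finset.range N, ((N : ℝ) + 2) * η := Finset.sum_le_sum hstep2
      _ = (N : ℝ) * (((N : ℝ) + 2) * η) := by
          rw [Finset.sum_const, Finset.card_range, nsmul_eq_mul]
      _ ≤ ε / 4 := by
          have hd : ((N : ℝ) + 1) * ((N : ℝ) + 3) * (ε / (4 * ((N : ℝ) + 1) * ((N : ℝ) + 3))) = ε / 4 := by
            field_simp
          have hcoef : (N : ℝ) * ((N : ℝ) + 2) ≤ ((N : ℝ) + 1) * ((N : ℝ) + 3) := by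
            nlinarith [Nat.cast_nonneg (α := ℝ) N]
          have h6 : ((N : ℝ) + 1) * ((N : ℝ) + 3) * η ≤
              ((N : ℝ) + 1) * ((N : ℝ) + 3) * (ε / (4 * ((N : ℝ) + 1) * ((N : ℝ) + 3))) := by
            exact mul_le_mul_of_nonneg_left hηε (by positivity)
          nlinarith [hη.le, Nat.cast_nonneg (α := ℝ) N]
  calc ∑ i, |γ (F i) - ∑ j : Fin N, t j * α (F i ∩ D j)|
      ≤ ∑ i, (|γ (F i \ A 0)| + |γ (F i ∩ A N)| +
        ∑ j ∈ Finset.range N, |γ (F i ∩ D j) - t j * α (F i ∩ D j)|) :=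
        Finset.sum_le_sum fun i _ => habs i
    _ = ∑ i, |γ (F i \ A 0)| + ∑ i, |γ (F i ∩ A N)| +
        ∑ j ∈ Finset.range N, ∑ i, |γ (F i ∩ D j) - t j * α (F i ∩ D j)| := by
        rw [Finset.sum_add_distrib, Finset.sum_add_distrib, Finset.sum_comm]
    _ ≤ 2 * (ε / 8) + 2 * (ε / 8) +
        ∑ j ∈ Finset.range N, (h * α (U j) + ((j : ℝ) + 3) * η) := by
        exact add_le_add (add_le_add hbot htop) (Finset.sum_le_sum hmid)
    _ ≤ 2 * (ε / 8) + 2 * (ε / 8) + (ε / 4 + ε / 4) := by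
        rw [Finset.sum_add_distrib]
        exact add_le_add (add_le_add le_rfl le_rfl) (add_le_add hsum1 hsum2)
    _ ≤ ε := by linarith


theorem complex_sum_bound
    (hunion : ∀ E ∈ R, ∀ F ∈ R, E ∪ F ∈ R)
    (hdiff : ∀ E ∈ R, ∀ F ∈ R, E \ F ∈ R)
    (hne : R.Nonempty)
    (β : Set T → ℂ)
    (hβadd : ∀ E ∈ R, ∀ F ∈ R, Disjoint E F → β (E ∪ F) = β E + β F)
    {M : ℝ} (hβM : ∀ E ∈ R, ‖β E‖ ≤ M)
    {m : ℕ} (Es : Fin m → Set T) (hEs : ∀ i, Es i ∈ R)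
    (hdisj : Pairwise (Function.onFun Disjoint Es)) :
    ∑ i, ‖β (Es i)‖ ≤ 4 * M := by
  have hradd : ∀ E ∈ R, ∀ F ∈ R, Disjoint E F →
      (β (E ∪ F)).re = (β E).re + (β F).re := by
    intro E hE F hF hd; rw [hβadd E hE F hF hd]; simp
  have hiadd : ∀ E ∈ R, ∀ F ∈ R, Disjoint E F →
      (β (E ∪ F)).im = (β E).im + (β F).im := by
    intro E hE F hF hd; rw [hβadd E hE F hF hd]; simp
  have h1 : ∑ i, |(β (Es i)).re| ≤ 2 * M := by
    apply boundary_sum hunion hdiff hne (fun E => (β E).re) hradd Es hEs hdisj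
    intro P
    exact le_trans (Complex.abs_re_le_norm _)
      (hβM _ (finset_union_mem hunion hne hdiff P Es (fun i _ => hEs i)))
  have h2 : ∑ i, |(β (Es i)).im| ≤ 2 * M := by
    apply boundary_sum hunion hdiff hne (fun E => (β E).im) hiadd Es hEs hdisj
    intro P
    exact le_trans (Complex.abs_im_le_norm _)
      (hβM _ (finset_union_mem hunion hne hdiff P Es (fun i _ => hEs i)))
  have h3 : ∀ i, ‖β (Es i)‖ ≤ |(β (Es i)).re| + |(β (Es i)).im| := fun i =>
    Complex.norm_le_abs_re_add_abs_im _
  calc ∑ i, ‖β (Es i)‖ ≤ ∑ i, (|(β (Es i)).re| + |(β (Es i)).im|) :=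
        Finset.sum_le_sum fun i _ => h3 i
    _ = ∑ i, |(β (Es i)).re| + ∑ i, |(β (Es i)).im| := Finset.sum_add_distrib
    _ ≤ 4 * M := by linarith

theorem core_complex
    (hunion : ∀ E ∈ R, ∀ F ∈ R, E ∪ F ∈ R)
    (hdiff : ∀ E ∈ R, ∀ F ∈ R, E \ F ∈ R)
    (hne : R.Nonempty)
    (α : Set T → ℝ)
    (hα0 : ∀ E ∈ R, 0 ≤ α E)
    (hαadd : ∀ E ∈ R, ∀ F ∈ R, Disjoint E F → α (E ∪ F) = α E + α F)
    {Mα : ℝ} (hMα : ∀ E ∈ R, α E ≤ Mα)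
    (β : Set T → ℂ)
    (hβadd : ∀ E ∈ R, ∀ F ∈ R, Disjoint E F → β (E ∪ F) = β E + β F)
    {Mβ : ℝ} (hMβ : ∀ E ∈ R, ‖β E‖ ≤ Mβ)
    (hacr : ∀ ε : ℝ, 0 < ε → ∃ δ : ℝ, 0 < δ ∧ ∀ E ∈ R, α E < δ → |(β E).re| < ε)
    (haci : ∀ ε : ℝ, 0 < ε → ∃ δ : ℝ, 0 < δ ∧ ∀ E ∈ R, α E < δ → |(β E).im| < ε)
    {ε : ℝ} (hε : 0 < ε) :
    ∃ (k : ℕ) (c : Fin k → ℂ) (Es : Fin k → Set T),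
      (∀ i, Es i ∈ R) ∧
      ∀ (m : ℕ) (F : Fin m → Set T), (∀ i, F i ∈ R) →
        Pairwise (Function.onFun Disjoint F) →
        ∑ i, ‖β (F i) - ∑ j, c j * (α (F i ∩ Es j) : ℂ)‖ ≤ ε := by
  have hradd : ∀ E ∈ R, ∀ F ∈ R, Disjoint E F →
      (β (E ∪ F)).re = (β E).re + (β F).re := by
    intro E hE F hF hd; rw [hβadd E hE F hF hd]; simp
  have hiadd : ∀ E ∈ R, ∀ F ∈ R, Disjoint E F →
      (β (E ∪ F)).im = (β E).im + (β F).im := by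
    intro E hE F hF hd; rw [hβadd E hE F hF hd]; simp
  have hrM : ∀ E ∈ R, |(β E).re| ≤ Mβ := fun E hE =>
    le_trans (Complex.abs_re_le_norm _) (hMβ E hE)
  have hiM : ∀ E ∈ R, |(β E).im| ≤ Mβ := fun E hE =>
    le_trans (Complex.abs_im_le_norm _) (hMβ E hE)
  obtain ⟨k1, c1, E1, hm1, hb1⟩ := core_real hunion hdiff hne α hα0 hαadd hMα
    (fun E => (β E).re) hradd hrM hacr (half_pos hε)
  obtain ⟨k2, c2, E2, hm2, hb2⟩ := core_real hunion hdiff hne α hα0 hαadd hMα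
    (fun E => (β E).im) hiadd hiM haci (half_pos hε)
  refine ⟨k1 + k2, Fin.append (fun j => (c1 j : ℂ)) (fun j => (c2 j : ℂ) * Complex.I),
    Fin.append E1 E2, ?_, ?_⟩
  · intro i
    refine Fin.addCases (motive := fun i => Fin.append E1 E2 i ∈ R) ?_ ?_ i
    · intro j; rw [Fin.append_left]; exact hm1 j
    · intro j; rw [Fin.append_right]; exact hm2 j
  · intro m F hF hdisj
    have hsplit : ∀ i, ∑ j : Fin (k1 + k2),
        (Fin.append (fun j => (c1 j : ℂ)) (fun j => (c2 j : ℂ) * Complex.I)) j *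
          (α (F i ∩ Fin.append E1 E2 j) : ℂ)
        = ((∑ j : Fin k1, c1 j * α (F i ∩ E1 j) : ℝ) : ℂ) +
          ((∑ j : Fin k2, c2 j * α (F i ∩ E2 j) : ℝ) : ℂ) * Complex.I := by
      intro i
      rw [Fin.sum_univ_add]
      simp only [Fin.append_left, Fin.append_right]
      push_cast
      rw [Finset.sum_mul]
      congr 1
      exact Finset.sum_congr rfl fun x _ => by ring
    have hxy : ∀ i, β (F i) - ∑ j, (Fin.append (fun j => (c1 j : ℂ))
          (fun j => (c2 j : ℂ) * Complex.I)) j * (α (F i ∩ Fin.append E1 E2 j) : ℂ)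
        = (((β (F i)).re - ∑ j : Fin k1, c1 j * α (F i ∩ E1 j) : ℝ) : ℂ) +
          (((β (F i)).im - ∑ j : Fin k2, c2 j * α (F i ∩ E2 j) : ℝ) : ℂ) * Complex.I := by
      intro i
      rw [hsplit i]
      apply Complex.ext <;>
        simp [Complex.sub_re, Complex.add_re, Complex.mul_re, Complex.sub_im,
          Complex.add_im, Complex.mul_im]
    have hnorm : ∀ x y : ℝ, ‖(x : ℂ) + (y : ℂ) * Complex.I‖ ≤ |x| + |y| := by
      intro x y
      calc ‖(x : ℂ) + (y : ℂ) * Complex.I‖ ≤ ‖(x : ℂ)‖ + ‖(y : ℂ) * Complex.I‖ :=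
            norm_add_le _ _
        _ = |x| + |y| := by
            rw [norm_mul, Complex.norm_I, Complex.norm_real, Complex.norm_real]
            simp [Real.norm_eq_abs]
    calc ∑ i, ‖β (F i) - ∑ j, (Fin.append (fun j => (c1 j : ℂ))
          (fun j => (c2 j : ℂ) * Complex.I)) j * (α (F i ∩ Fin.append E1 E2 j) : ℂ)‖
        ≤ ∑ i, (|(β (F i)).re - ∑ j : Fin k1, c1 j * α (F i ∩ E1 j)| +
            |(β (F i)).im - ∑ j : Fin k2, c2 j * α (F i ∩ E2 j)|) := by
          refine Finset.sum_le_sum fun i _ => ?_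
          rw [hxy i]
          exact hnorm _ _
      _ = ∑ i, |(β (F i)).re - ∑ j : Fin k1, c1 j * α (F i ∩ E1 j)| +
          ∑ i, |(β (F i)).im - ∑ j : Fin k2, c2 j * α (F i ∩ E2 j)| :=
          Finset.sum_add_distrib
      _ ≤ ε / 2 + ε / 2 := add_le_add (hb1 m F hF hdisj) (hb2 m F hF hdisj)
      _ = ε := by ring

end RNDaux

/-- The total variation `|β|(E)` of a complex-valued set function `β` on a ring of sets `R`:
the supremum of `∑ i, |β (E i)|` over all finite families of pairwise disjoint members of `R`
contained in `E`. -/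
noncomputable def totalVariation {T : Type*} (R : Set (Set T)) (β : Set T → ℂ)
    (E : Set T) : ℝ :=
  sSup {x : ℝ | ∃ (k : ℕ) (Es : Fin k → Set T),
    (∀ i, Es i ∈ R) ∧ Pairwise (Function.onFun Disjoint Es) ∧ (∀ i, Es i ⊆ E) ∧
    x = ∑ i, ‖β (Es i)‖}

/-- **Theorem (Radon–Nikodym–Darst, uniform part).** Let `α` be a bounded nonnegative
finitely additive set function and `β` a bounded complex-valued finitely additive set
function on a ring of sets `R`, with `β` absolutely continuous with respect to `α`. Then
there is a sequence of `R`-simple functions `φ_n = ∑ i, c n i • χ_{Es n i}` such that with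
`β_n E = ∑ i, c n i * α (E ∩ Es n i)` one has `β E = lim_n β_n E` for every `E ∈ R`, and
moreover `sup_{E ∈ R} |β - β_n| (E) → 0`. -/
theorem radon_nikodym_darst_uniform
    {T : Type*} (R : Set (Set T))
    (hne : R.Nonempty)
    (hunion : ∀ E ∈ R, ∀ F ∈ R, E ∪ F ∈ R)
    (hdiff : ∀ E ∈ R, ∀ F ∈ R, E \ F ∈ R)
    (α : Set T → ℝ) (β : Set T → ℂ)
    (hα0 : ∀ E ∈ R, 0 ≤ α E)
    (hαadd : ∀ E ∈ R, ∀ F ∈ R, Disjoint E F → α (E ∪ F) = α E + α F)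
    (hβadd : ∀ E ∈ R, ∀ F ∈ R, Disjoint E F → β (E ∪ F) = β E + β F)
    (hαbdd : ∃ M : ℝ, ∀ E ∈ R, α E ≤ M)
    (hβbdd : ∃ M : ℝ, ∀ E ∈ R, ‖β E‖ ≤ M)
    (hac : ∀ ε : ℝ, 0 < ε → ∃ δ : ℝ, 0 < δ ∧
      ∀ E ∈ R, α E < δ → totalVariation R β E < ε) :
    ∃ (k : ℕ → ℕ) (c : (n : ℕ) → Fin (k n) → ℂ) (Es : (n : ℕ) → Fin (k n) → Set T),
      (∀ (n : ℕ) (i : Fin (k n)), Es n i ∈ R) ∧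
      (∀ E ∈ R, Tendsto (fun n => ∑ i, c n i * (α (E ∩ Es n i) : ℂ)) atTop (𝓝 (β E))) ∧
      (∀ ε : ℝ, 0 < ε → ∃ N : ℕ, ∀ n ≥ N, ∀ E ∈ R,
        totalVariation R (fun F => β F - ∑ i, c n i * (α (F ∩ Es n i) : ℂ)) E ≤ ε) := by
  classical
  obtain ⟨Mα, hMα⟩ := hαbdd
  obtain ⟨Mβ, hMβ⟩ := hβbdd
  have hbddA : ∀ E : Set T, BddAbove {x : ℝ | ∃ (k : ℕ) (Es : Fin k → Set T),
      (∀ i, Es i ∈ R) ∧ Pairwise (Function.onFun Disjoint Es) ∧ (∀ i, Es i ⊆ E) ∧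
      x = ∑ i, ‖β (Es i)‖} := by
    intro E
    refine ⟨4 * Mβ, ?_⟩
    rintro x ⟨k, Es, h1, h2, h3, rfl⟩
    exact RNDaux.complex_sum_bound hunion hdiff hne β hβadd hMβ Es h1 h2
  have hnormle : ∀ E ∈ R, ‖β E‖ ≤ totalVariation R β E := by
    intro E hE
    apply le_csSup (hbddA E)
    exact ⟨1, fun _ => E, fun _ => hE, Subsingleton.pairwise, fun _ => subset_rfl,
      by simp⟩
  have hacr : ∀ ε : ℝ, 0 < ε → ∃ δ : ℝ, 0 < δ ∧
      ∀ E ∈ R, α E < δ → |(β E).re| < ε := by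
    intro ε hε
    obtain ⟨δ, hδ, hp⟩ := hac ε hε
    exact ⟨δ, hδ, fun E hE hα => lt_of_le_of_lt
      (le_trans (Complex.abs_re_le_norm _) (hnormle E hE)) (hp E hE hα)⟩
  have haci : ∀ ε : ℝ, 0 < ε → ∃ δ : ℝ, 0 < δ ∧
      ∀ E ∈ R, α E < δ → |(β E).im| < ε := by
    intro ε hε
    obtain ⟨δ, hδ, hp⟩ := hac ε hε
    exact ⟨δ, hδ, fun E hE hα => lt_of_le_of_lt
      (le_trans (Complex.abs_im_le_norm _) (hnormle E hE)) (hp E hE hα)⟩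
  have key : ∀ n : ℕ, ∃ (k : ℕ) (c : Fin k → ℂ) (Es : Fin k → Set T),
      (∀ i, Es i ∈ R) ∧
      ∀ (m : ℕ) (F : Fin m → Set T), (∀ i, F i ∈ R) →
        Pairwise (Function.onFun Disjoint F) →
        ∑ i, ‖β (F i) - ∑ j, c j * (α (F i ∩ Es j) : ℂ)‖ ≤ 1 / (n + 1) := by
    intro n
    exact RNDaux.core_complex hunion hdiff hne α hα0 hαadd hMα β hβadd hMβ hacr haci
      (ε := 1 / (n + 1)) (by positivity)
  choose k c Es hmem hbound using key
  refine ⟨k, c, Es, hmem, ?_, ?_⟩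
  · intro E hE
    rw [tendsto_iff_norm_sub_tendsto_zero]
    have hb : ∀ n : ℕ, ‖(∑ i, c n i * (α (E ∩ Es n i) : ℂ)) - β E‖ ≤ 1 / (n + 1) := by
      intro n
      have h := hbound n 1 (fun _ => E) (fun _ => hE) Subsingleton.pairwise
      simp only [Fin.sum_univ_one] at h
      rw [norm_sub_rev]
      exact h
    refine squeeze_zero (fun n => norm_nonneg _) hb ?_
    exact tendsto_one_div_add_atTop_nhds_zero_nat
  · intro ε hε
    obtain ⟨N, hN⟩ := exists_nat_gt (1 / ε)
    refine ⟨N, fun n hn E hE => ?_⟩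
    have hle : 1 / ((n : ℝ) + 1) ≤ ε := by
      rw [div_le_iff₀ (by positivity)]
      rw [div_lt_iff₀ hε] at hN
      have hcast : (N : ℝ) ≤ n := Nat.cast_le.mpr hn
      nlinarith [hε]
    refine le_trans ?_ hle
    rw [totalVariation]
    refine Real.sSup_le ?_ (by positivity)
    rintro x ⟨k', Fs, h1, h2, h3, rfl⟩
    exact hbound n k' Fs h1 h2
end

section
/- Let μ, ν be finite measures on a measurable space (T,Σ) with ν absolutely continuous with respect to μ. If f ∈ dom J*, then |f| ∈ dom J*: there exists h ∈ L²(μ) such that ∫ φ·conj(h) dμ = ∫ φ·|f| dν for all simple functions φ. -/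
open MeasureTheory

/-- **Lemma.** Let `μ, ν` be finite measures with `ν ≪ μ`, and let `J` be the embedding of
the simple functions in `L²(μ)` into `L²(ν)`.  If `f ∈ dom J*` (witnessed by `g = J* f`),
then `|f| ∈ dom J*`. -/
theorem abs_mem_dom_adjoint
    {T : Type*} [MeasurableSpace T] (μ ν : Measure T)
    [IsFiniteMeasure μ] [IsFiniteMeasure ν] (hac : ν ≪ μ)
    (f : T → ℂ) (hf : MemLp f 2 ν)
    (hdom : ∃ g : T → ℂ, MemLp g 2 μ ∧
      ∀ φ : SimpleFunc T ℂ,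
        ∫ x, φ x * (starRingEnd ℂ) (g x) ∂μ = ∫ x, φ x * (starRingEnd ℂ) (f x) ∂ν) :
    ∃ h : T → ℂ, MemLp h 2 μ ∧
      ∀ φ : SimpleFunc T ℂ,
        ∫ x, φ x * (starRingEnd ℂ) (h x) ∂μ = ∫ x, φ x * (‖f x‖ : ℂ) ∂ν := by
  obtain ⟨g, hg, hgf⟩ := hdom
  set ρ : T → ℝ := fun x => (ν.rnDeriv μ x).toReal with hρdef
  have hρnn : ∀ x, 0 ≤ ρ x := fun x => ENNReal.toReal_nonneg
  have key : ∀ w : T → ℂ, ∫ x, ρ x • w x ∂μ = ∫ x, w x ∂ν := fun w =>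
    integral_rnDeriv_smul hac
  have hg1 : Integrable g μ := hg.integrable one_le_two
  have hf1 : Integrable f ν := hf.integrable one_le_two
  have hfρ : Integrable (fun x => ρ x • f x) μ :=
    (integrable_rnDeriv_smul_iff hac).mpr hf1
  -- step 1 : g = ρ • f  μ-a.e.
  have hge : g =ᵐ[μ] fun x => ρ x • f x := by
    refine Integrable.ae_eq_of_forall_setIntegral_eq _ _ hg1 hfρ fun s hs _ => ?_
    have hφ := hgf ((SimpleFunc.const T (1 : ℂ)).restrict s)
    have hind : ∀ w : T → ℂ, ∀ x,
        ((SimpleFunc.const T (1 : ℂ)).restrict s) x * w x = s.indicator w x := by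
      intro w x
      rw [SimpleFunc.coe_restrict _ hs]
      by_cases hx : x ∈ s <;> simp [hx]
    have hl : ∀ (m : Measure T) (w : T → ℂ),
        ∫ x, ((SimpleFunc.const T (1 : ℂ)).restrict s) x * w x ∂m = ∫ x in s, w x ∂m := by
      intro m w
      rw [← integral_indicator hs]
      exact integral_congr_ae (Filter.Eventually.of_forall fun x => hind w x)
    rw [hl μ, hl ν] at hφ
    -- hφ : ∫ x in s, conj (g x) ∂μ = ∫ x in s, conj (f x) ∂ν
    have h2 : ∫ x in s, ρ x • (starRingEnd ℂ) (f x) ∂μ = ∫ x in s, (starRingEnd ℂ) (f x) ∂ν :=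
      setIntegral_rnDeriv_smul hac hs
    have h3 : ∫ x in s, (starRingEnd ℂ) (g x) ∂μ
        = ∫ x in s, (starRingEnd ℂ) (ρ x • f x) ∂μ := by
      rw [hφ, ← h2]
      exact integral_congr_ae (Filter.Eventually.of_forall fun x => by
        simp [Complex.real_smul, map_mul, Complex.conj_ofReal])
    have h4 := congrArg (starRingEnd ℂ) h3
    rw [← integral_conj, ← integral_conj] at h4
    simpa using h4
  -- the witness
  refine ⟨fun x => (‖g x‖ : ℂ), hg.norm.ofReal, fun φ => ?_⟩
  have hnorm : (fun x => φ x * (starRingEnd ℂ) ((‖g x‖ : ℂ)))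
      =ᵐ[μ] fun x => ρ x • (φ x * (‖f x‖ : ℂ)) := by
    filter_upwards [hge] with x hx
    rw [Complex.conj_ofReal, hx, norm_smul, Real.norm_of_nonneg (hρnn x), Complex.real_smul]
    push_cast
    ring
  rw [integral_congr_ae hnorm, key]
end

section
/- Let μ, ν be finite measures on a measurable space (T,Σ) with ν absolutely continuous with respect to μ. The operator J* is positive in the following sense: if f ∈ dom J* and f ≥ 0 ν-almost everywhere, then J*f ≥ 0 μ-almost everywhere; that is, if f ∈ L²(ν), f ≥ 0 ν-a.e., and g ∈ L²(μ) satisfies ∫ φ·conj(g) dμ = ∫ φ·conj(f) dν for all simple φ, then g ≥ 0 μ-a.e. -/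
open MeasureTheory
open scoped ComplexOrder

/-- **Lemma.** Let `μ, ν` be finite measures with `ν ≪ μ`, and let `J` be the embedding of
the simple functions in `L²(μ)` into `L²(ν)`.  The adjoint `J*` is a positive operator:
if `f ∈ dom J*` with `f ≥ 0` ν-a.e. and `g = J* f`, then `g ≥ 0` μ-a.e. -/
theorem adjoint_positive
    {T : Type*} [MeasurableSpace T] (μ ν : Measure T)
    [IsFiniteMeasure μ] [IsFiniteMeasure ν] (hac : ν ≪ μ)
    (f : T → ℂ) (hf : MemLp f 2 ν) (hfpos : ∀ᵐ x ∂ν, 0 ≤ f x)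
    (g : T → ℂ) (hg : MemLp g 2 μ)
    (hadj : ∀ φ : SimpleFunc T ℂ,
      ∫ x, φ x * (starRingEnd ℂ) (g x) ∂μ = ∫ x, φ x * (starRingEnd ℂ) (f x) ∂ν) :
    ∀ᵐ x ∂μ, 0 ≤ g x := by
  have hgi : Integrable g μ := hg.integrable (by norm_num)
  have hfi : Integrable f ν := hf.integrable (by norm_num)
  have hfim : ∀ᵐ x ∂ν, (f x).im = 0 := by
    filter_upwards [hfpos] with x hx
    rw [Complex.le_def] at hx
    exact hx.2.symm
  have hfre : ∀ᵐ x ∂ν, 0 ≤ (f x).re := by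
    filter_upwards [hfpos] with x hx
    rw [Complex.le_def] at hx
    exact hx.1
  have hreal : f =ᵐ[ν] fun x => ((f x).re : ℂ) := by
    filter_upwards [hfim] with x hx
    exact Complex.ext (by simp) (by simp [hx])
  have hconjf : (fun x => (starRingEnd ℂ) (f x)) =ᵐ[ν] f := by
    filter_upwards [hfim] with x hx
    exact Complex.conj_eq_iff_im.mpr hx
  -- the integral of f over any set is the (real) integral of its real part
  have hval : ∀ E : Set T, MeasurableSet E →
      ∫ x in E, f x ∂ν = ((∫ x in E, (f x).re ∂ν : ℝ) : ℂ) := by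
    intro E hE
    rw [integral_congr_ae (ae_restrict_of_ae hreal)]
    exact integral_ofReal
  -- key: for every measurable set E, ∫_E g ∂μ = real number ∫_E re f ∂ν
  have key : ∀ E : Set T, MeasurableSet E →
      ∫ x in E, g x ∂μ = ((∫ x in E, (f x).re ∂ν : ℝ) : ℂ) := by
    intro E hE
    have h := hadj (SimpleFunc.piecewise E hE (SimpleFunc.const T (1:ℂ))
      (SimpleFunc.const T (0:ℂ)))
    have conv : ∀ (m : Measure T) (h : T → ℂ),
        ∫ x, (SimpleFunc.piecewise E hE (SimpleFunc.const T (1:ℂ))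
          (SimpleFunc.const T (0:ℂ))) x * h x ∂m = ∫ x in E, h x ∂m := by
      intro m h
      rw [← integral_indicator hE]
      congr 1
      funext x
      by_cases hx : x ∈ E <;> simp [hx, Set.indicator_apply]
    rw [conv μ, conv ν] at h
    have h2 : ∫ x in E, (starRingEnd ℂ) (f x) ∂ν = ((∫ x in E, (f x).re ∂ν : ℝ) : ℂ) := by
      rw [integral_congr_ae (ae_restrict_of_ae hconjf), hval E hE]
    have h3 : (starRingEnd ℂ) (∫ x in E, g x ∂μ) = ((∫ x in E, (f x).re ∂ν : ℝ) : ℂ) := by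
      rw [← integral_conj, h, h2]
    calc ∫ x in E, g x ∂μ
        = (starRingEnd ℂ) ((starRingEnd ℂ) (∫ x in E, g x ∂μ)) := by simp
      _ = ((∫ x in E, (f x).re ∂ν : ℝ) : ℂ) := by rw [h3]; simp
  -- imaginary part of g vanishes a.e.
  have him0 : (fun x => (g x).im) =ᵐ[μ] 0 := by
    apply hgi.im.ae_eq_zero_of_forall_setIntegral_eq_zero
    intro E hE _
    have e1 : ∫ x in E, RCLike.im (g x) ∂μ = RCLike.im (∫ x in E, g x ∂μ) :=
      integral_im hgi.restrict
    show ∫ x in E, RCLike.im (g x) ∂μ = 0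
    rw [e1, key E hE]
    simp [RCLike.im]
  -- real part of g is nonneg a.e.
  have hre0 : 0 ≤ᵐ[μ] fun x => (g x).re := by
    apply ae_nonneg_of_forall_setIntegral_nonneg hgi.re
    intro E hE _
    have e1 : ∫ x in E, RCLike.re (g x) ∂μ = RCLike.re (∫ x in E, g x ∂μ) :=
      integral_re hgi.restrict
    show 0 ≤ ∫ x in E, RCLike.re (g x) ∂μ
    rw [e1, key E hE]
    have : 0 ≤ ∫ x in E, (f x).re ∂ν :=
      integral_nonneg_of_ae (ae_restrict_of_ae hfre)
    simpa [RCLike.re] using this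
  filter_upwards [him0, hre0] with x h1 h2
  rw [Complex.le_def]
  exact ⟨by simpa using h2, by simpa using h1.symm⟩
end

section
/- Let μ, ν be finite measures on a measurable space (T,Σ) with ν absolutely continuous with respect to μ. If f, g ∈ L²(ν) satisfy f ≥ 0 and g ≥ 0 ν-almost everywhere and f ∈ dom J*, then the pointwise minimum f ∧ g belongs to dom J*: there exists h ∈ L²(μ) such that ∫ φ·conj(h) dμ = ∫ φ·(f ∧ g) dν for all simple functions φ. -/
open MeasureTheory
open scoped ComplexOrder ENNReal

private lemma integrable_conj' {T : Type*} [MeasurableSpace T] {μ : Measure T} {F : T → ℂ}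
    (h : Integrable F μ) : Integrable (fun x => (starRingEnd ℂ) (F x)) μ :=
  ⟨Complex.continuous_conj.comp_aestronglyMeasurable h.1,
    by simpa [HasFiniteIntegral] using h.2⟩

/-- **Lemma.** Let `μ, ν` be finite measures with `ν ≪ μ`, and let `J` be the embedding of
the simple functions in `L²(μ)` into `L²(ν)`.  If `f, g ∈ L²(ν)` are ν-a.e. nonnegative and
`f ∈ dom J*`, then the pointwise minimum `f ∧ g` belongs to `dom J*`. -/
theorem min_mem_dom_adjoint
    {T : Type*} [MeasurableSpace T] (μ ν : Measure T)
    [IsFiniteMeasure μ] [IsFiniteMeasure ν] (hac : ν ≪ μ)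
    (f g : T → ℂ) (hf : MemLp f 2 ν) (hg : MemLp g 2 ν)
    (hfpos : ∀ᵐ x ∂ν, 0 ≤ f x) (hgpos : ∀ᵐ x ∂ν, 0 ≤ g x)
    (hdom : ∃ g₀ : T → ℂ, MemLp g₀ 2 μ ∧
      ∀ φ : SimpleFunc T ℂ,
        ∫ x, φ x * (starRingEnd ℂ) (g₀ x) ∂μ = ∫ x, φ x * (starRingEnd ℂ) (f x) ∂ν) :
    ∃ h : T → ℂ, MemLp h 2 μ ∧
      ∀ φ : SimpleFunc T ℂ,
        ∫ x, φ x * (starRingEnd ℂ) (h x) ∂μ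
          = ∫ x, φ x * ((min (f x).re (g x).re : ℝ) : ℂ) ∂ν := by
  obtain ⟨g₀, hg₀mem, hg₀eq⟩ := hdom
  set ρe : T → ℝ≥0∞ := ν.rnDeriv μ with hρe
  set ρ : T → ℝ := fun x => (ρe x).toReal with hρ
  have hρe_meas : Measurable ρe := Measure.measurable_rnDeriv ν μ
  have hν_eq : μ.withDensity ρe = ν := Measure.withDensity_rnDeriv_eq ν μ hac
  -- transfer ν-a.e. statements to μ-a.e. conditional on ρe ≠ 0
  have hae : ∀ {P : T → Prop}, (∀ᵐ x ∂ν, P x) → ∀ᵐ x ∂μ, ρe x ≠ 0 → P x := by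
    intro P hP
    rw [← hν_eq] at hP
    exact (ae_withDensity_iff hρe_meas).mp hP
  set f' : T → ℂ := hf.1.mk f with hf'
  set g' : T → ℂ := hg.1.mk g with hg'
  have hf'meas : StronglyMeasurable f' := hf.1.stronglyMeasurable_mk
  have hg'meas : StronglyMeasurable g' := hg.1.stronglyMeasurable_mk
  have hff' : f =ᵐ[ν] f' := hf.1.ae_eq_mk
  have hgg' : g =ᵐ[ν] g' := hg.1.ae_eq_mk
  have hf'mem : MemLp f' 2 ν := hf.ae_eq hff'
  -- key identity: conj g₀ =ᵐ[μ] ρ • conj f'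
  have hint_g₀ : Integrable (fun x => (starRingEnd ℂ) (g₀ x)) μ :=
    integrable_conj' (hg₀mem.integrable (by norm_num))
  have hint_f' : Integrable f' ν := hf'mem.integrable (by norm_num)
  have hint_ρf' : Integrable (fun x => ρ x • (starRingEnd ℂ) (f' x)) μ :=
    (integrable_rnDeriv_smul_iff hac).mpr (integrable_conj' hint_f')
  have hkey : (fun x => (starRingEnd ℂ) (g₀ x)) =ᵐ[μ] fun x => ρ x • (starRingEnd ℂ) (f' x) := by
    apply ae_eq_of_forall_setIntegral_eq_of_sigmaFinite
      (fun s hs _ => hint_g₀.integrableOn) (fun s hs _ => hint_ρf'.integrableOn)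
    intro s hs _
    have hφ := hg₀eq (SimpleFunc.piecewise s hs (SimpleFunc.const T (1:ℂ)) (SimpleFunc.const T 0))
    have hφval : ∀ x : T, (SimpleFunc.piecewise s hs (SimpleFunc.const T (1:ℂ))
        (SimpleFunc.const T 0)) x = s.indicator (fun _ => (1:ℂ)) x := by
      intro x; by_cases hx : x ∈ s <;> simp [SimpleFunc.piecewise_apply, Set.indicator_apply, hx]
    have h1 : ∫ x, (SimpleFunc.piecewise s hs (SimpleFunc.const T (1:ℂ)) (SimpleFunc.const T 0)) x
        * (starRingEnd ℂ) (g₀ x) ∂μ = ∫ x in s, (starRingEnd ℂ) (g₀ x) ∂μ := by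
      rw [← integral_indicator hs]
      congr 1; ext x
      rw [hφval]
      by_cases hx : x ∈ s <;> simp [Set.indicator_apply, hx]
    have h2 : ∫ x, (SimpleFunc.piecewise s hs (SimpleFunc.const T (1:ℂ)) (SimpleFunc.const T 0)) x
        * (starRingEnd ℂ) (f x) ∂ν = ∫ x in s, (starRingEnd ℂ) (f x) ∂ν := by
      rw [← integral_indicator hs]
      congr 1; ext x
      rw [hφval]
      by_cases hx : x ∈ s <;> simp [Set.indicator_apply, hx]
    rw [h1, h2] at hφ
    rw [hφ]
    rw [setIntegral_rnDeriv_smul hac hs]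
    exact setIntegral_congr_ae hs (by filter_upwards [hff'] with x hx _; rw [hx])
  -- the candidate function
  set h : T → ℂ := fun x => ((min (f' x).re (g' x).re * ρ x : ℝ) : ℂ) with hh
  have hhmeas : StronglyMeasurable h :=
    (Complex.measurable_ofReal.comp
      (((Complex.measurable_re.comp hf'meas.measurable).min
        (Complex.measurable_re.comp hg'meas.measurable)).mul
        hρe_meas.ennreal_toReal)).stronglyMeasurable
  refine ⟨h, ?_, ?_⟩
  · -- Memℒp: dominated by g₀
    apply MemLp.of_le hg₀mem hhmeas.aestronglyMeasurable
    filter_upwards [hkey, hae hfpos, hae hgpos, hae hff'.symm, hae hgg'.symm,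
      Measure.rnDeriv_lt_top ν μ] with x hk hfp hgp hfe hge hlt
    by_cases hx : ρe x = 0
    · simp [hh, hρ, hx]
    · have hfpx : 0 ≤ f' x := by rw [hfe hx]; exact hfp hx
      have hgpx : 0 ≤ g' x := by rw [hge hx]; exact hgp hx
      have hfre : 0 ≤ (f' x).re := by
        rw [Complex.le_def] at hfpx; simpa using hfpx.1
      have hgre : 0 ≤ (g' x).re := by
        rw [Complex.le_def] at hgpx; simpa using hgpx.1
      have hρpos : 0 ≤ ρ x := ENNReal.toReal_nonneg
      have : ‖g₀ x‖ = ρ x * ‖f' x‖ := by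
        have : ‖(starRingEnd ℂ) (g₀ x)‖ = ‖ρ x • (starRingEnd ℂ) (f' x)‖ := by rw [hk]
        simpa [norm_smul, abs_of_nonneg hρpos] using this
      rw [this]
      have h1 : ‖h x‖ = min (f' x).re (g' x).re * ρ x := by
        rw [hh]
        simp only [Complex.norm_real, Real.norm_eq_abs]
        exact abs_of_nonneg (mul_nonneg (le_min hfre hgre) hρpos)
      rw [h1, mul_comm]
      apply mul_le_mul_of_nonneg_left _ hρpos
      exact le_trans (min_le_left _ _) (Complex.re_le_norm _)
  · intro φ
    have hconj : ∀ x, (starRingEnd ℂ) (h x) = h x := by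
      intro x; rw [hh]; exact Complex.conj_ofReal _
    calc ∫ x, φ x * (starRingEnd ℂ) (h x) ∂μ
        = ∫ x, ρ x • (φ x * ((min (f' x).re (g' x).re : ℝ) : ℂ)) ∂μ := by
          congr 1; ext x
          rw [hconj, hh, Complex.real_smul]
          push_cast
          ring
      _ = ∫ x, φ x * ((min (f' x).re (g' x).re : ℝ) : ℂ) ∂ν :=
          integral_rnDeriv_smul hac
      _ = ∫ x, φ x * ((min (f x).re (g x).re : ℝ) : ℂ) ∂ν := by
          apply integral_congr_ae
          filter_upwards [hff', hgg'] with x h1 h2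
          rw [h1, h2]
end
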